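/- arXiv:0809.2082 — 3 statements merged into one kernel-verified Lean document; each statement's English description precedes it below -/
import Mathlib

section
/- Let (p_n)_{n≥1} be a sequence of integers with 0 ≤ p_n ≤ n−3 and limsup_{n→∞} p_n/n < 1/2. Then the mean spatial Betti number satisfies μ_n[b_{2p_n}(ℓ)] / ( ∑_{k=0}^{p_n} C(n−1,k) ) → 1 as n → ∞, where C(n−1,k) is the binomial coefficient. -/
open MeasureTheory Filter Finset

noncomputable section

/-- The i.i.d. product measure `μ^{⊗ n}` on `Fin n → ℝ`. -/
def pmeas (μ : MeasureTheory.Measure ℝ) (n : ℕ) : MeasureTheory.Measure (Fin n → ℝ) :=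
  MeasureTheory.Measure.pi fun _ => μ

/-- The minimal index (as a natural number) at which `ℓ` attains its maximum. -/
def maxIdx (n : ℕ) (ℓ : Fin n → ℝ) : ℕ :=
  sInf {i : ℕ | ∃ h : i < n, ∀ j : Fin n, ℓ j ≤ ℓ ⟨i, h⟩}

/-- The `i`-th coordinate of `ℓ` (`0`-based), with junk value `0` out of range. -/
def coord (n : ℕ) (ℓ : Fin n → ℝ) (i : ℕ) : ℝ :=
  if h : i < n then ℓ ⟨i, h⟩ else 0

/-- `a_p(ℓ)`: the number of short subsets of cardinality `p+1` containing the minimal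
index `i₀` of a maximal coordinate. -/
def aCount (n p : ℕ) (ℓ : Fin n → ℝ) : ℕ :=
  Nat.card {J : Finset (Fin n) //
    J.card = p + 1 ∧ (∃ i ∈ J, (i : ℕ) = maxIdx n ℓ) ∧
    ∑ j ∈ J, ℓ j < ∑ j ∈ Jᶜ, ℓ j}

/-- `ã_p(ℓ)`: the number of median subsets of cardinality `p+1` containing `i₀`. -/
def medCount (n p : ℕ) (ℓ : Fin n → ℝ) : ℕ :=
  Nat.card {J : Finset (Fin n) //
    J.card = p + 1 ∧ (∃ i ∈ J, (i : ℕ) = maxIdx n ℓ) ∧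
    ∑ j ∈ J, ℓ j = ∑ j ∈ Jᶜ, ℓ j}

/-- The `p`-th Betti number of the planar polygon space:
`b_p(ℓ) = a_p(ℓ) + ã_p(ℓ) + a_{n-3-p}(ℓ)`. -/
def bPlanar (n p : ℕ) (ℓ : Fin n → ℝ) : ℕ :=
  aCount n p ℓ + medCount n p ℓ + aCount n (n - 3 - p) ℓ

/-- `â_p(ℓ)`: the number of short subsets of cardinality `p+1` containing the last index. -/
def hatACount (n p : ℕ) (ℓ : Fin n → ℝ) : ℕ :=
  Nat.card {J : Finset (Fin n) //
    J.card = p + 1 ∧ (∃ i ∈ J, (i : ℕ) = n - 1) ∧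
    ∑ j ∈ J, ℓ j < ∑ j ∈ Jᶜ, ℓ j}

/-- The `2p`-th Betti number of the spatial polygon space:
`b_{2p}(ℓ) = ∑_{j=0}^p (â_j(ℓ) - â_{n-j-2}(ℓ))`. -/
def bSpatial (n p : ℕ) (ℓ : Fin n → ℝ) : ℝ :=
  ∑ j ∈ Finset.range (p + 1), ((hatACount n j ℓ : ℝ) - (hatACount n (n - j - 2) ℓ : ℝ))

/-- The Poincaré polynomial of the planar polygon space `M_ℓ`. -/
def poincareM (n : ℕ) (t : ℝ) (ℓ : Fin n → ℝ) : ℝ :=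
  ∑ p ∈ Finset.range (n - 2), (bPlanar n p ℓ : ℝ) * t ^ p

/-- The Poincaré polynomial of the spatial polygon space `N_ℓ`. -/
def poincareN (n : ℕ) (t : ℝ) (ℓ : Fin n → ℝ) : ℝ :=
  ∑ p ∈ Finset.range (n - 2), bSpatial n p ℓ * t ^ (2 * p)

/-- The stopping time `τ_σ(ℓ)`, for `σ` a permutation of `{1, …, n-1}`. -/
def tauPerm (n : ℕ) (σ : Equiv.Perm (Fin (n - 1))) (ℓ : Fin n → ℝ) : ℕ :=
  sInf {t : ℕ |
    0 ≤ coord n ℓ (n - 1) + ∑ i : Fin (n - 1),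
      (if (i : ℕ) < t then coord n ℓ ((σ i : ℕ)) else - coord n ℓ ((σ i : ℕ)))}

/-- `ℓ̃`: the vector obtained from `ℓ` by exchanging the coordinates at positions `i₀`
(the minimal index of a maximal coordinate) and `n`. -/
def tildeVec (n : ℕ) (ℓ : Fin n → ℝ) : Fin n → ℝ := fun j =>
  if (j : ℕ) = maxIdx n ℓ then coord n ℓ (n - 1)
  else if (j : ℕ) = n - 1 then coord n ℓ (maxIdx n ℓ)
  else ℓ j

/-- `τ(ℓ) = τ_id(ℓ)`. -/
def tau (n : ℕ) (ℓ : Fin n → ℝ) : ℕ := tauPerm n (Equiv.refl _) ℓ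

/-- `τ̃(ℓ) = τ_id(ℓ̃)`. -/
def tauTilde (n : ℕ) (ℓ : Fin n → ℝ) : ℕ := tau n (tildeVec n ℓ)


/-! ### Auxiliary material for the proof of `stmt4` -/

namespace Stmt4Aux

/-- Elementary inequality: `exp (-u) ≤ 1 - u + u ^ 2` for `u ≥ 0`. -/
lemma exp_neg_le_quad {u : ℝ} (hu : 0 ≤ u) : Real.exp (-u) ≤ 1 - u + u ^ 2 := by
  have h1 : (1 + u) * Real.exp (-u) ≤ 1 := by
    have h := Real.add_one_le_exp u
    have h2 : (1 + u) * Real.exp (-u) ≤ Real.exp u * Real.exp (-u) := by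
      nlinarith [Real.exp_pos (-u)]
    rwa [← Real.exp_add, add_neg_cancel, Real.exp_zero] at h2
  have h2 : (1:ℝ) ≤ (1 - u + u ^ 2) * (1 + u) := by nlinarith [pow_nonneg hu 3]
  have hpos : (0:ℝ) < 1 + u := by linarith
  nlinarith [Real.exp_pos (-u)]

/-- Elementary inequality: `exp u ≤ 1 + u + u ^ 2 * exp u` for `u ≥ 0`. -/
lemma exp_le_quad {u : ℝ} (hu : 0 ≤ u) : Real.exp u ≤ 1 + u + u ^ 2 * Real.exp u := by
  have h1 : (1 - u) * Real.exp u ≤ 1 := by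
    have h := Real.add_one_le_exp (-u)
    have h2 : (1 - u) * Real.exp u ≤ Real.exp (-u) * Real.exp u := by
      nlinarith [Real.exp_pos u]
    rwa [← Real.exp_add, neg_add_cancel, Real.exp_zero] at h2
  have h3 : Real.exp u - 1 ≤ u * Real.exp u := by nlinarith
  nlinarith [mul_le_mul_of_nonneg_left h3 hu]

lemma sq_le_two_exp {u : ℝ} (hu : 0 ≤ u) : u ^ 2 ≤ 2 * Real.exp u := by
  have h := Real.sum_le_exp_of_nonneg hu 3
  simp [Finset.sum_range_succ] at h
  nlinarith

lemma pow_bound {A B β : ℝ} (hA : 0 < A) (hB : 0 < B) (hAB : A ≤ B) {n k : ℕ}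
    (hkn : k ≤ n) (hβn : β * n ≤ k) :
    A ^ k * B ^ (n - k) ≤ (A ^ β * B ^ (1 - β)) ^ n := by
  have hABpos : 0 < A / B := div_pos hA hB
  have hABle : A / B ≤ 1 := (div_le_one hB).mpr hAB
  have h1 : A ^ k * B ^ (n - k) = (A / B) ^ k * B ^ n := by
    rw [pow_sub₀ B hB.ne' hkn, div_pow]
    field_simp
  have h2 : (A / B) ^ k ≤ ((A / B) ^ β) ^ n := by
    calc (A / B) ^ k = (A / B) ^ ((k : ℕ) : ℝ) := (Real.rpow_natCast _ k).symm
      _ ≤ (A / B) ^ (β * (n : ℝ)) :=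
          Real.rpow_le_rpow_of_exponent_ge hABpos hABle hβn
      _ = ((A / B) ^ β) ^ n := by
          rw [← Real.rpow_natCast ((A / B) ^ β) n, ← Real.rpow_mul hABpos.le]
  have h3 : ((A / B) ^ β) * B = A ^ β * B ^ (1 - β) := by
    have hBβ : (0:ℝ) < B ^ β := Real.rpow_pos_of_pos hB β
    rw [Real.div_rpow hA.le hB.le, Real.rpow_sub hB, Real.rpow_one]
    field_simp
  calc A ^ k * B ^ (n - k) = (A / B) ^ k * B ^ n := h1
    _ ≤ ((A / B) ^ β) ^ n * B ^ n := by
        apply mul_le_mul_of_nonneg_right h2 (pow_nonneg hB.le n)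
    _ = (A ^ β * B ^ (1 - β)) ^ n := by rw [← mul_pow, h3]

lemma tendsto_aux {ρ : ℝ} (h0 : 0 < ρ) (h1 : ρ < 1) :
    Tendsto (fun n : ℕ => ((n : ℝ) + 1) * ρ ^ n) atTop (nhds 0) := by
  have ha : Tendsto (fun n : ℕ => (n : ℝ) * ρ ^ n) atTop (nhds 0) := by
    have := tendsto_pow_const_div_const_pow_of_one_lt 1 ((one_lt_div h0).mpr h1)
    refine this.congr fun n => ?_
    rw [pow_one, div_pow, one_pow, div_div_eq_mul_div, div_one]
  have hb : Tendsto (fun n : ℕ => ρ ^ n) atTop (nhds 0) :=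
    tendsto_pow_atTop_nhds_zero_of_lt_one h0.le h1
  have := ha.add hb
  simpa [add_mul] using this

/-- The event that the subset `J` is short. -/
def shortSet (n : ℕ) (J : Finset (Fin n)) : Set (Fin n → ℝ) :=
  {ℓ | ∑ j ∈ J, ℓ j < ∑ j ∈ Jᶜ, ℓ j}

lemma measurable_sumJ {n : ℕ} (J : Finset (Fin n)) :
    Measurable fun ℓ : Fin n → ℝ => ∑ j ∈ J, ℓ j :=
  Finset.measurable_sum _ fun i _ => measurable_pi_apply i

lemma measurableSet_shortSet (n : ℕ) (J : Finset (Fin n)) : MeasurableSet (shortSet n J) :=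
  measurableSet_lt (measurable_sumJ J) (measurable_sumJ Jᶜ)

open Classical in
/-- The family of subsets of cardinality `p + 1` containing the last index. -/
def famF (n p : ℕ) : Finset (Finset (Fin n)) :=
  Finset.univ.filter fun J => J.card = p + 1 ∧ ∃ i ∈ J, (i : ℕ) = n - 1

lemma card_famF {n : ℕ} (hn : 1 ≤ n) (p : ℕ) : (famF n p).card = (n - 1).choose p := by
  classical
  have hlt : n - 1 < n := by omega
  set a : Fin n := ⟨n - 1, hlt⟩ with ha
  have hmem : ∀ J : Finset (Fin n), (∃ i ∈ J, (i : ℕ) = n - 1) ↔ a ∈ J := by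
    intro J
    constructor
    · rintro ⟨i, hi, hieq⟩
      have : i = a := Fin.ext hieq
      rwa [this] at hi
    · intro h; exact ⟨a, h, rfl⟩
  have himg : famF n p = ((univ.erase a).powersetCard p).image (insert a) := by
    ext J
    simp only [famF, mem_filter, mem_univ, true_and, mem_image, mem_powersetCard, hmem]
    constructor
    · rintro ⟨hcard, haJ⟩
      refine ⟨J.erase a, ⟨fun x hx => ?_, ?_⟩, Finset.insert_erase haJ⟩
      · rcases Finset.mem_erase.mp hx with ⟨hxa, _⟩
        exact Finset.mem_erase.mpr ⟨hxa, mem_univ x⟩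
      · rw [Finset.card_erase_of_mem haJ, hcard]; omega
    · rintro ⟨K, ⟨hKsub, hKcard⟩, rfl⟩
      have haK : a ∉ K := fun h => (Finset.mem_erase.mp (hKsub h)).1 rfl
      exact ⟨by rw [Finset.card_insert_of_notMem haK, hKcard], Finset.mem_insert_self _ _⟩
  have hinj : Set.InjOn (insert a)
      (((univ.erase a).powersetCard p : Finset (Finset (Fin n))) : Set (Finset (Fin n))) := by
    intro K1 h1 K2 h2 hins
    rw [Finset.mem_coe] at h1 h2
    have h1' : a ∉ K1 := fun h =>
      (Finset.mem_erase.mp ((Finset.mem_powersetCard.mp h1).1 h)).1 rfl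
    have h2' : a ∉ K2 := fun h =>
      (Finset.mem_erase.mp ((Finset.mem_powersetCard.mp h2).1 h)).1 rfl
    rw [← Finset.erase_insert h1', ← Finset.erase_insert h2', hins]
  rw [himg, Finset.card_image_of_injOn hinj, Finset.card_powersetCard,
    Finset.card_erase_of_mem (mem_univ a), Finset.card_univ, Fintype.card_fin]

lemma mem_famF_card {n p : ℕ} {J : Finset (Fin n)} (h : J ∈ famF n p) : J.card = p + 1 := by
  classical
  exact ((Finset.mem_filter.mp h).2).1

lemma hatACount_eq_sum (n p : ℕ) (ℓ : Fin n → ℝ) :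
    (hatACount n p ℓ : ℝ) =
      ∑ J ∈ famF n p, (shortSet n J).indicator (fun _ => (1:ℝ)) ℓ := by
  classical
  have h1 : hatACount n p ℓ = (univ.filter fun J : Finset (Fin n) =>
      J.card = p + 1 ∧ (∃ i ∈ J, (i : ℕ) = n - 1) ∧
        ∑ j ∈ J, ℓ j < ∑ j ∈ Jᶜ, ℓ j).card := by
    rw [hatACount, Nat.card_eq_fintype_card]
    convert Fintype.card_subtype _
  have h2 : (univ.filter fun J : Finset (Fin n) =>
      J.card = p + 1 ∧ (∃ i ∈ J, (i : ℕ) = n - 1) ∧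
        ∑ j ∈ J, ℓ j < ∑ j ∈ Jᶜ, ℓ j)
      = (famF n p).filter fun J => ℓ ∈ shortSet n J := by
    rw [famF, Finset.filter_filter]
    apply Finset.filter_congr
    intro J _
    simp [shortSet, and_assoc]
  rw [h1, h2, Finset.card_filter]
  push_cast
  refine Finset.sum_congr rfl fun J _ => ?_
  by_cases h : ℓ ∈ shortSet n J <;> simp [h]

variable (μ : MeasureTheory.Measure ℝ) [IsProbabilityMeasure μ]

instance (n : ℕ) : IsProbabilityMeasure (pmeas μ n) := by
  unfold pmeas; infer_instance

lemma integrable_indicator_shortSet (n : ℕ) (J : Finset (Fin n)) :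
    Integrable ((shortSet n J).indicator fun _ => (1:ℝ)) (pmeas μ n) :=
  (integrable_const (1:ℝ)).indicator (measurableSet_shortSet n J)

lemma integral_indicator_shortSet (n : ℕ) (J : Finset (Fin n)) :
    ∫ ℓ, (shortSet n J).indicator (fun _ => (1:ℝ)) ℓ ∂(pmeas μ n)
      = (pmeas μ n (shortSet n J)).toReal := by
  have := integral_indicator_one (μ := pmeas μ n) (measurableSet_shortSet n J)
  simpa [Pi.one_def, measureReal_def] using this

lemma integrable_hatACount (n p : ℕ) :
    Integrable (fun ℓ => (hatACount n p ℓ : ℝ)) (pmeas μ n) := by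
  have heq : (fun ℓ => (hatACount n p ℓ : ℝ))
      = fun ℓ => ∑ J ∈ famF n p, (shortSet n J).indicator (fun _ => (1:ℝ)) ℓ :=
    funext (hatACount_eq_sum n p)
  rw [heq]
  exact integrable_finset_sum _ fun J _ => integrable_indicator_shortSet μ n J

lemma integral_hatACount (n p : ℕ) :
    ∫ ℓ, (hatACount n p ℓ : ℝ) ∂(pmeas μ n)
      = ∑ J ∈ famF n p, (pmeas μ n (shortSet n J)).toReal := by
  simp_rw [hatACount_eq_sum]
  rw [integral_finset_sum _ fun J _ => integrable_indicator_shortSet μ n J]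
  exact Finset.sum_congr rfl fun J _ => integral_indicator_shortSet μ n J

/-- Chernoff bound for the event that the `K`-sum is at most the `Kᶜ`-sum. -/
lemma chernoff {t : ℝ} (ht : 0 ≤ t)
    (hA : Integrable (fun x => Real.exp (-t * x)) μ)
    (hB : Integrable (fun x => Real.exp (t * x)) μ)
    (n : ℕ) (K : Finset (Fin n)) :
    (pmeas μ n {ℓ | ∑ j ∈ K, ℓ j ≤ ∑ j ∈ Kᶜ, ℓ j}).toReal ≤
      (∫ x, Real.exp (-t * x) ∂μ) ^ K.card *
        (∫ x, Real.exp (t * x) ∂μ) ^ (n - K.card) := by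
  classical
  letI : MeasureSpace ℝ := ⟨μ⟩
  haveI : IsProbabilityMeasure (volume : Measure ℝ) := ‹IsProbabilityMeasure μ›
  have hvol : pmeas μ n = (volume : Measure (Fin n → ℝ)) := by
    rw [MeasureTheory.volume_pi]; rfl
  set f : Fin n → ℝ → ℝ := fun i x => Real.exp ((if i ∈ K then -t else t) * x) with hf
  have hfint : ∀ i, Integrable (f i) (volume : Measure ℝ) := by
    intro i
    by_cases h : i ∈ K
    · simp only [hf, h, if_true]; exact hA
    · simp only [hf, h, if_false]; exact hB
  have hprod : Integrable (fun ℓ : Fin n → ℝ => ∏ i, f i (ℓ i)) (volume : Measure (Fin n → ℝ)) :=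
    Integrable.fin_nat_prod hfint
  set S : Set (Fin n → ℝ) := {ℓ | ∑ j ∈ K, ℓ j ≤ ∑ j ∈ Kᶜ, ℓ j} with hS
  have hSm : MeasurableSet S := measurableSet_le (measurable_sumJ K) (measurable_sumJ Kᶜ)
  have hle : ∀ ℓ, S.indicator (fun _ => (1:ℝ)) ℓ ≤ ∏ i, f i (ℓ i) := by
    intro ℓ
    have hp : ∏ i, f i (ℓ i) = Real.exp (∑ i, (if i ∈ K then -t else t) * ℓ i) := by
      rw [Real.exp_sum]
    by_cases h : ℓ ∈ S
    · rw [Set.indicator_of_mem h, hp]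
      apply Real.one_le_exp
      have hsum : ∑ i, (if i ∈ K then -t else t) * ℓ i
          = t * (∑ j ∈ Kᶜ, ℓ j - ∑ j ∈ K, ℓ j) := by
        rw [← Finset.sum_add_sum_compl K]
        have h1 : ∑ i ∈ K, (if i ∈ K then -t else t) * ℓ i = ∑ i ∈ K, -t * ℓ i :=
          Finset.sum_congr rfl fun i hi => by simp [hi]
        have h2 : ∑ i ∈ Kᶜ, (if i ∈ K then -t else t) * ℓ i = ∑ i ∈ Kᶜ, t * ℓ i :=
          Finset.sum_congr rfl fun i hi => by
            simp [Finset.mem_compl.mp hi]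
        rw [h1, h2, ← Finset.mul_sum, ← Finset.mul_sum]; ring
      rw [hsum]
      have hs : ∑ j ∈ K, ℓ j ≤ ∑ j ∈ Kᶜ, ℓ j := h
      nlinarith
    · rw [Set.indicator_of_notMem h]
      exact Finset.prod_nonneg fun i _ => (Real.exp_pos _).le
  have hindint : Integrable (S.indicator fun _ => (1:ℝ)) (volume : Measure (Fin n → ℝ)) :=
    (integrable_const (1:ℝ)).indicator hSm
  calc (pmeas μ n S).toReal
      = ∫ ℓ, S.indicator (fun _ => (1:ℝ)) ℓ ∂(pmeas μ n) := by
        rw [hvol, ← measureReal_def, ← integral_indicator_one hSm]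
        rfl
    _ ≤ ∫ ℓ, ∏ i, f i (ℓ i) ∂(pmeas μ n) := by
        rw [hvol]; exact integral_mono hindint hprod hle
    _ = ∏ i, ∫ x, f i x ∂(volume : Measure ℝ) := by
        rw [hvol]; exact integral_fin_nat_prod_eq_prod f
    _ = (∫ x, Real.exp (-t * x) ∂μ) ^ K.card * (∫ x, Real.exp (t * x) ∂μ) ^ (n - K.card) := by
        have h1 : ∀ i ∈ K, ∫ x, f i x ∂(volume : Measure ℝ) = ∫ x, Real.exp (-t * x) ∂μ := by
          intro i hi; simp only [hf, if_pos hi]; rfl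
        have h2 : ∀ i ∈ Kᶜ, ∫ x, f i x ∂(volume : Measure ℝ) = ∫ x, Real.exp (t * x) ∂μ := by
          intro i hi; simp only [hf, if_neg (Finset.mem_compl.mp hi)]; rfl
        rw [← Finset.prod_mul_prod_compl K, Finset.prod_congr rfl h1, Finset.prod_congr rfl h2,
          Finset.prod_const, Finset.prod_const, Finset.card_compl, Fintype.card_fin]

variable {η : ℝ}

omit [IsProbabilityMeasure μ] in
lemma int_exp_mul (hη : 0 < η) (hint : Integrable (fun x => Real.exp (η * x)) μ)
    (hpos : ∀ᵐ x ∂μ, 0 < x) {c : ℝ} (hc : c ≤ η) :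
    Integrable (fun x => Real.exp (c * x)) μ := by
  refine hint.mono' ?_ ?_
  · exact (Real.continuous_exp.comp (continuous_const.mul continuous_id)).aestronglyMeasurable
  · filter_upwards [hpos] with x hx
    rw [Real.norm_eq_abs, abs_of_pos (Real.exp_pos _)]
    exact Real.exp_le_exp.mpr (mul_le_mul_of_nonneg_right hc hx.le)

omit [IsProbabilityMeasure μ] in
lemma int_id (hη : 0 < η) (hint : Integrable (fun x => Real.exp (η * x)) μ)
    (hpos : ∀ᵐ x ∂μ, 0 < x) : Integrable (fun x : ℝ => x) μ := by
  refine (hint.const_mul (1/η)).mono' aestronglyMeasurable_id ?_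
  filter_upwards [hpos] with x hx
  rw [Real.norm_eq_abs, abs_of_pos hx]
  have h := Real.add_one_le_exp (η * x)
  rw [div_mul_eq_mul_div, le_div_iff₀ hη, one_mul]
  nlinarith

omit [IsProbabilityMeasure μ] in
lemma int_sq_exp (hη : 0 < η) (hint : Integrable (fun x => Real.exp (η * x)) μ)
    (hpos : ∀ᵐ x ∂μ, 0 < x) :
    Integrable (fun x : ℝ => x ^ 2 * Real.exp (η / 2 * x)) μ := by
  refine (hint.const_mul (8/η^2)).mono' ?_ ?_
  · exact ((continuous_pow 2).mul
      (Real.continuous_exp.comp (continuous_const.mul continuous_id))).aestronglyMeasurable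
  · filter_upwards [hpos] with x hx
    have hu : 0 ≤ η / 2 * x := by positivity
    have h1 := sq_le_two_exp hu
    have hxsq : x ^ 2 ≤ 8 / η ^ 2 * Real.exp (η / 2 * x) := by
      have hη2 : (0:ℝ) < η ^ 2 := by positivity
      rw [mul_pow] at h1
      rw [div_mul_eq_mul_div, le_div_iff₀ hη2]
      nlinarith [Real.exp_pos (η / 2 * x)]
    have hexp2 : Real.exp (η / 2 * x) * Real.exp (η / 2 * x) = Real.exp (η * x) := by
      rw [← Real.exp_add]; ring_nf
    rw [Real.norm_eq_abs, abs_of_nonneg (by positivity)]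
    calc x ^ 2 * Real.exp (η / 2 * x)
        ≤ (8 / η ^ 2 * Real.exp (η / 2 * x)) * Real.exp (η / 2 * x) :=
          mul_le_mul_of_nonneg_right hxsq (Real.exp_pos _).le
      _ = 8 / η ^ 2 * Real.exp (η * x) := by rw [mul_assoc, hexp2]

lemma A_le_bound (hη : 0 < η) (hint : Integrable (fun x => Real.exp (η * x)) μ)
    (hpos : ∀ᵐ x ∂μ, 0 < x) {t : ℝ} (ht0 : 0 < t) (ht : t ≤ η / 2) :
    ∫ x, Real.exp (-t * x) ∂μ
      ≤ 1 - t * (∫ x, x ∂μ) + t ^ 2 * (∫ x, x ^ 2 * Real.exp (η / 2 * x) ∂μ) := by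
  have hid := int_id μ hη hint hpos
  have hsq := int_sq_exp μ hη hint hpos
  have hcomb : Integrable
      (fun x => 1 - t * x + t ^ 2 * (x ^ 2 * Real.exp (η / 2 * x))) μ :=
    ((integrable_const 1).sub (hid.const_mul t)).add (hsq.const_mul (t ^ 2))
  have hAint : Integrable (fun x => Real.exp (-t * x)) μ :=
    int_exp_mul μ hη hint hpos (by linarith)
  have hmono : ∫ x, Real.exp (-t * x) ∂μ
      ≤ ∫ x, (1 - t * x + t ^ 2 * (x ^ 2 * Real.exp (η / 2 * x))) ∂μ := by
    refine integral_mono_ae hAint hcomb ?_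
    filter_upwards [hpos] with x hx
    have htx : 0 ≤ t * x := by positivity
    have h1 : Real.exp (-(t * x)) ≤ 1 - t * x + (t * x) ^ 2 := exp_neg_le_quad htx
    have h2 : (1:ℝ) ≤ Real.exp (η / 2 * x) := Real.one_le_exp (by positivity)
    have heq : Real.exp (-t * x) = Real.exp (-(t * x)) := by ring_nf
    rw [heq]
    nlinarith [sq_nonneg (t * x), mul_pos ht0 hx]
  calc ∫ x, Real.exp (-t * x) ∂μ
      ≤ ∫ x, (1 - t * x + t ^ 2 * (x ^ 2 * Real.exp (η / 2 * x))) ∂μ := hmono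
    _ = 1 - t * (∫ x, x ∂μ) + t ^ 2 * (∫ x, x ^ 2 * Real.exp (η / 2 * x) ∂μ) := by
        have e1 : ∫ x, (1 - t * x + t ^ 2 * (x ^ 2 * Real.exp (η / 2 * x))) ∂μ
            = (∫ x, (1 - t * x) ∂μ) + ∫ x, t ^ 2 * (x ^ 2 * Real.exp (η / 2 * x)) ∂μ :=
          integral_add ((integrable_const 1).sub (hid.const_mul t)) (hsq.const_mul (t ^ 2))
        have e2 : ∫ x, (1 - t * x) ∂μ = (∫ x, (1:ℝ) ∂μ) - ∫ x, t * x ∂μ :=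
          integral_sub (integrable_const 1) (hid.const_mul t)
        rw [e1, e2, integral_const_mul, integral_const_mul, integral_const]
        simp [measure_univ]

lemma B_le_bound (hη : 0 < η) (hint : Integrable (fun x => Real.exp (η * x)) μ)
    (hpos : ∀ᵐ x ∂μ, 0 < x) {t : ℝ} (ht0 : 0 < t) (ht : t ≤ η / 2) :
    ∫ x, Real.exp (t * x) ∂μ
      ≤ 1 + t * (∫ x, x ∂μ) + t ^ 2 * (∫ x, x ^ 2 * Real.exp (η / 2 * x) ∂μ) := by
  have hid := int_id μ hη hint hpos
  have hsq := int_sq_exp μ hη hint hpos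
  have hcomb : Integrable
      (fun x => 1 + t * x + t ^ 2 * (x ^ 2 * Real.exp (η / 2 * x))) μ :=
    (((integrable_const 1).add (hid.const_mul t))).add (hsq.const_mul (t ^ 2))
  have hBint : Integrable (fun x => Real.exp (t * x)) μ :=
    int_exp_mul μ hη hint hpos (by linarith)
  have hmono : ∫ x, Real.exp (t * x) ∂μ
      ≤ ∫ x, (1 + t * x + t ^ 2 * (x ^ 2 * Real.exp (η / 2 * x))) ∂μ := by
    refine integral_mono_ae hBint hcomb ?_
    filter_upwards [hpos] with x hx
    have htx : 0 ≤ t * x := by positivity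
    have h1 : Real.exp (t * x) ≤ 1 + t * x + (t * x) ^ 2 * Real.exp (t * x) := exp_le_quad htx
    have h2 : Real.exp (t * x) ≤ Real.exp (η / 2 * x) :=
      Real.exp_le_exp.mpr (mul_le_mul_of_nonneg_right ht hx.le)
    nlinarith [sq_nonneg (t * x), Real.exp_pos (t * x),
      mul_pos (mul_pos ht0 ht0) (mul_pos hx hx)]
  calc ∫ x, Real.exp (t * x) ∂μ
      ≤ ∫ x, (1 + t * x + t ^ 2 * (x ^ 2 * Real.exp (η / 2 * x))) ∂μ := hmono
    _ = 1 + t * (∫ x, x ∂μ) + t ^ 2 * (∫ x, x ^ 2 * Real.exp (η / 2 * x) ∂μ) := by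
        have e1 : ∫ x, (1 + t * x + t ^ 2 * (x ^ 2 * Real.exp (η / 2 * x))) ∂μ
            = (∫ x, (1 + t * x) ∂μ) + ∫ x, t ^ 2 * (x ^ 2 * Real.exp (η / 2 * x)) ∂μ :=
          integral_add ((integrable_const 1).add (hid.const_mul t)) (hsq.const_mul (t ^ 2))
        have e2 : ∫ x, (1 + t * x) ∂μ = (∫ x, (1:ℝ) ∂μ) + ∫ x, t * x ∂μ :=
          integral_add (integrable_const 1) (hid.const_mul t)
        rw [e1, e2, integral_const_mul, integral_const_mul, integral_const]
        simp [measure_univ]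

lemma combo_lt_one {A B m K t β : ℝ} (hm : 0 < m) (hK : 0 ≤ K) (hβ : 1/2 < β) (hβ1 : β ≤ 1)
    (ht0 : 0 < t) (ht : t ≤ m * (2 * β - 1) / (2 * (K + 1)))
    (hA : A ≤ 1 - t * m + t ^ 2 * K) (hB : B ≤ 1 + t * m + t ^ 2 * K) :
    β * A + (1 - β) * B < 1 := by
  have h2 : t * (2 * (K + 1)) ≤ m * (2 * β - 1) := by
    rw [← le_div_iff₀ (by positivity)]; exact ht
  have h3 : t * K < m * (2 * β - 1) := by nlinarith [mul_nonneg ht0.le hK]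
  have h4 : β * A ≤ β * (1 - t * m + t ^ 2 * K) :=
    mul_le_mul_of_nonneg_left hA (by linarith)
  have h5 : (1 - β) * B ≤ (1 - β) * (1 + t * m + t ^ 2 * K) :=
    mul_le_mul_of_nonneg_left hB (by linarith)
  nlinarith [mul_pos ht0 (sub_pos.mpr h3)]

end Stmt4Aux

set_option maxHeartbeats 1000000 in
open Stmt4Aux in
/-- If `(p_n)` is a sequence of integers with `0 ≤ p_n ≤ n-3` and
`limsup pₙ/n < 1/2`, then `μ_n[b_{2p_n}(ℓ)] / (∑_{k=0}^{p_n} C(n-1,k)) → 1`. -/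
theorem stmt4 (μ : MeasureTheory.Measure ℝ) [IsProbabilityMeasure μ] [NullSingletonClass μ]
    (hsupp : μ (Set.Ioi (0 : ℝ))ᶜ = 0)
    (hexp : ∃ η > 0, Integrable (fun x => Real.exp (η * x)) μ)
    (p : ℕ → ℕ) (hp : ∀ n, 3 ≤ n → p n ≤ n - 3)
    (hlim : limsup (fun n => (p n : ℝ) / n) atTop < 1 / 2) :
    Tendsto (fun n => (∫ ℓ, bSpatial n (p n) ℓ ∂(pmeas μ n)) /
      (∑ k ∈ Finset.range (p n + 1), (Nat.choose (n - 1) k : ℝ))) atTop (nhds 1) := by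
  classical
  obtain ⟨η, hη, hηint⟩ := hexp
  have hpos : ∀ᵐ x ∂μ, 0 < x := by
    rw [ae_iff]
    have hset : {x : ℝ | ¬ 0 < x} = (Set.Ioi (0:ℝ))ᶜ := by
      ext x; simp [Set.mem_Ioi]
    rw [hset]; exact hsupp
  set m := ∫ x, x ∂μ with hm_def
  set Kc := ∫ x, x ^ 2 * Real.exp (η / 2 * x) ∂μ with hKc_def
  have hKc0 : 0 ≤ Kc := integral_nonneg fun x => by positivity
  have hIoi : μ (Set.Ioi (0:ℝ)) = 1 := by
    have h := measure_add_measure_compl (μ := μ) (measurableSet_Ioi (a := (0:ℝ)))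
    rw [hsupp, add_zero, measure_univ] at h
    exact h
  have hm : 0 < m := by
    rw [hm_def, integral_pos_iff_support_of_nonneg_ae (hpos.mono fun x hx => hx.le)
      (int_id μ hη hηint hpos)]
    have hsub : Set.Ioi (0:ℝ) ⊆ Function.support fun x : ℝ => x :=
      fun x hx => ne_of_gt hx
    calc (0 : ENNReal) < 1 := zero_lt_one
      _ = μ (Set.Ioi (0:ℝ)) := hIoi.symm
      _ ≤ μ (Function.support fun x : ℝ => x) := measure_mono hsub
  -- choice of exponents
  set L := limsup (fun n => (p n : ℝ) / n) atTop with hL_def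
  have hL : L < 1/2 := hlim
  set M := max L 0 with hM_def
  have hM : M < 1/2 := max_lt hL (by norm_num)
  have hM0 : (0:ℝ) ≤ M := le_max_right _ _
  set g := (M + 1/2)/2 with hg_def   -- this is α'
  set a := (g + 1/2)/2 with ha_def   -- this is α
  have hMg : M < g := by
    rw [hg_def]; linarith
  have hLg : L < g := by
    have h1 : L ≤ M := le_max_left _ _
    linarith
  have hg12 : g < 1/2 := by
    rw [hg_def]; linarith
  have hga : g < a := by
    rw [ha_def]; linarith
  have ha12 : a < 1/2 := by
    rw [ha_def]; linarith
  have hg0 : (0:ℝ) ≤ g := by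
    rw [hg_def]; linarith
  have ha0 : (0:ℝ) ≤ a := by linarith
  set β := 1 - a with hβ_def
  have hβhalf : 1/2 < β := by rw [hβ_def]; linarith
  have hβ1 : β ≤ 1 := by rw [hβ_def]; linarith
  -- Chernoff parameter
  set t := min (η/2) (m * (2*β - 1) / (2*(Kc + 1))) with ht_def
  have ht0 : 0 < t := lt_min (by positivity)
    (div_pos (mul_pos hm (by linarith)) (by linarith))
  have htη2 : t ≤ η/2 := min_le_left _ _
  have ht2 : t ≤ m * (2*β - 1) / (2*(Kc + 1)) := min_le_right _ _
  have hAint : Integrable (fun x => Real.exp (-t * x)) μ :=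
    int_exp_mul μ hη hηint hpos (by linarith)
  have hBint : Integrable (fun x => Real.exp (t * x)) μ :=
    int_exp_mul μ hη hηint hpos (by linarith)
  set A := ∫ x, Real.exp (-t * x) ∂μ with hA_def
  set B := ∫ x, Real.exp (t * x) ∂μ with hB_def
  haveI : NeZero μ := ⟨IsProbabilityMeasure.ne_zero μ⟩
  have hA0 : 0 < A := integral_exp_pos hAint
  have hB0 : 0 < B := integral_exp_pos hBint
  have hA1 : A ≤ 1 := by
    rw [hA_def]
    calc ∫ x, Real.exp (-t*x) ∂μ ≤ ∫ x, (1:ℝ) ∂μ := by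
          refine integral_mono_ae hAint (integrable_const 1) ?_
          filter_upwards [hpos] with x hx
          have h1 : -t * x ≤ 0 := by nlinarith
          calc Real.exp (-t*x) ≤ Real.exp 0 := Real.exp_le_exp.mpr h1
            _ = 1 := Real.exp_zero
      _ = 1 := by simp
  have hB1 : 1 ≤ B := by
    rw [hB_def]
    calc (1:ℝ) = ∫ x, (1:ℝ) ∂μ := by simp
      _ ≤ ∫ x, Real.exp (t*x) ∂μ := by
          refine integral_mono_ae (integrable_const 1) hBint ?_
          filter_upwards [hpos] with x hx
          exact Real.one_le_exp (by positivity)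
  have hAB : A ≤ B := hA1.trans hB1
  have hcombo : β * A + (1 - β) * B < 1 :=
    combo_lt_one hm hKc0 hβhalf hβ1 ht0 ht2
      (A_le_bound μ hη hηint hpos ht0 htη2) (B_le_bound μ hη hηint hpos ht0 htη2)
  set ρ := A ^ β * B ^ (1 - β) with hρ_def
  have hρ0 : 0 < ρ := mul_pos (Real.rpow_pos_of_pos hA0 _) (Real.rpow_pos_of_pos hB0 _)
  have hρ1 : ρ < 1 :=
    lt_of_le_of_lt (Real.geom_mean_le_arith_mean2_weighted (by linarith) (by linarith)
      hA0.le hB0.le (by ring)) hcombo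
  -- eventual facts
  have hgap : ∀ᶠ n : ℕ in atTop, 1 ≤ (a - g) * n := by
    have h2 : Tendsto (fun n : ℕ => (a - g) * (n:ℝ)) atTop atTop :=
      (tendsto_natCast_atTop_atTop).const_mul_atTop (by linarith)
    exact h2.eventually_ge_atTop 1
  have hboundf : IsBoundedUnder (· ≤ ·) atTop (fun n : ℕ => (p n : ℝ) / n) := by
    refine ⟨1, ?_⟩
    rw [Filter.eventually_map]
    filter_upwards [eventually_ge_atTop 3] with n hn
    have hn0 : (0:ℝ) < n := by exact_mod_cast Nat.lt_of_lt_of_le (by norm_num) hn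
    rw [div_le_one hn0]
    have := hp n hn
    exact_mod_cast Nat.le_of_lt_succ (by omega)
  have hev1 : ∀ᶠ n : ℕ in atTop, (p n : ℝ) / n < g :=
    eventually_lt_of_limsup_lt hLg hboundf
  -- main eventual bound
  have hmain : ∀ᶠ n : ℕ in atTop,
      1 - ((n:ℝ) + 1) * ρ ^ n ≤ (∫ ℓ, bSpatial n (p n) ℓ ∂(pmeas μ n)) /
        (∑ k ∈ Finset.range (p n + 1), (Nat.choose (n - 1) k : ℝ)) ∧
      (∫ ℓ, bSpatial n (p n) ℓ ∂(pmeas μ n)) /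
        (∑ k ∈ Finset.range (p n + 1), (Nat.choose (n - 1) k : ℝ)) ≤ 1 := by
    filter_upwards [hev1, hgap, eventually_ge_atTop 3] with n hratio hgapn hn3
    have hn0 : (0:ℝ) < n := by exact_mod_cast Nat.lt_of_lt_of_le (by norm_num) hn3
    have hr3 : p n ≤ n - 3 := hp n hn3
    have hpn_lt : (p n : ℝ) < g * n := by rwa [div_lt_iff₀ hn0] at hratio
    have hsmall : ∀ j : ℕ, j ≤ p n → (j:ℝ) + 1 ≤ a * n := by
      intro j hj
      have hc : (j:ℝ) ≤ p n := Nat.cast_le.mpr hj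
      nlinarith
    set D := ∑ k ∈ Finset.range (p n + 1), (Nat.choose (n - 1) k : ℝ) with hD_def
    have hD1 : (1:ℝ) ≤ D := by
      rw [hD_def]
      have h0 : (0:ℕ) ∈ Finset.range (p n + 1) := by simp
      have := Finset.single_le_sum (f := fun k => (Nat.choose (n - 1) k : ℝ))
        (fun k _ => by positivity) h0
      simpa using this
    have hD0 : (0:ℝ) < D := by linarith
    have hProb_le_one : ∀ J : Finset (Fin n), (pmeas μ n (shortSet n J)).toReal ≤ 1 := by
      intro J
      calc (pmeas μ n (shortSet n J)).toReal ≤ (pmeas μ n Set.univ).toReal :=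
            ENNReal.toReal_mono (measure_ne_top _ _) (measure_mono (Set.subset_univ _))
        _ = 1 := by simp
    have hchern : ∀ K : Finset (Fin n), β * n ≤ (K.card : ℝ) →
        (pmeas μ n {ℓ | ∑ j ∈ K, ℓ j ≤ ∑ j ∈ Kᶜ, ℓ j}).toReal ≤ ρ ^ n := by
      intro K hKβ
      refine le_trans (chernoff μ ht0.le hAint hBint n K) ?_
      rw [hρ_def]
      exact pow_bound hA0 hB0 hAB (by simpa using Finset.card_le_univ K) hKβ
    have hPlb : ∀ j : ℕ, j ≤ p n → ∀ J ∈ famF n j,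
        1 - ρ ^ n ≤ (pmeas μ n (shortSet n J)).toReal := by
      intro j hj J hJ
      have hcard : J.card = j + 1 := mem_famF_card hJ
      have hj1n : j + 1 ≤ n := by omega
      have hSm := measurableSet_shortSet n J
      have hcompl_eq : (shortSet n J)ᶜ = {ℓ | ∑ i ∈ Jᶜ, ℓ i ≤ ∑ i ∈ Jᶜᶜ, ℓ i} := by
        ext ℓ; simp [shortSet, not_lt, compl_compl]
      have hcompl_le : (pmeas μ n (shortSet n J)ᶜ).toReal ≤ ρ ^ n := by
        rw [hcompl_eq]
        refine hchern Jᶜ ?_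
        rw [Finset.card_compl, Fintype.card_fin, hcard, Nat.cast_sub hj1n]
        push_cast
        have h5 := hsmall j hj
        simp only [hβ_def]
        nlinarith
      have hsum : (pmeas μ n (shortSet n J)).toReal
          + (pmeas μ n (shortSet n J)ᶜ).toReal = 1 := by
        have h := measure_add_measure_compl (μ := pmeas μ n) hSm
        rw [measure_univ] at h
        have h2 := congrArg ENNReal.toReal h
        rw [ENNReal.toReal_add (measure_ne_top _ _) (measure_ne_top _ _)] at h2
        simpa using h2
      linarith
    have hPub : ∀ j : ℕ, j ≤ p n → ∀ J ∈ famF n (n - j - 2),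
        (pmeas μ n (shortSet n J)).toReal ≤ ρ ^ n := by
      intro j hj J hJ
      have hcard : J.card = (n - j - 2) + 1 := mem_famF_card hJ
      have hsub : shortSet n J ⊆ {ℓ | ∑ i ∈ J, ℓ i ≤ ∑ i ∈ Jᶜ, ℓ i} := by
        intro ℓ hℓ
        have hlt : ∑ i ∈ J, ℓ i < ∑ i ∈ Jᶜ, ℓ i := hℓ
        exact le_of_lt hlt
      refine le_trans (ENNReal.toReal_mono (measure_ne_top _ _) (measure_mono hsub)) ?_
      refine hchern J ?_
      rw [hcard]
      have h1 : ((n - j - 2 + 1 : ℕ) : ℝ) = (n : ℝ) - (j + 1) := by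
        have he : n - j - 2 + 1 = n - (j + 1) := by omega
        rw [he, Nat.cast_sub (by omega)]
        push_cast; ring
      rw [h1]
      have h5 := hsmall j hj
      simp only [hβ_def]
      nlinarith
    have hEub : ∀ j ∈ Finset.range (p n + 1),
        ∑ J ∈ famF n j, (pmeas μ n (shortSet n J)).toReal ≤ (Nat.choose (n - 1) j : ℝ) := by
      intro j hjm
      calc ∑ J ∈ famF n j, (pmeas μ n (shortSet n J)).toReal
          ≤ ∑ _J ∈ famF n j, (1:ℝ) := Finset.sum_le_sum fun J _ => hProb_le_one J
        _ = ((famF n j).card : ℝ) := by simp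
        _ = (Nat.choose (n - 1) j : ℝ) := by rw [card_famF (by omega) j]
    have hElb : ∀ j ∈ Finset.range (p n + 1),
        (Nat.choose (n - 1) j : ℝ) * (1 - ρ ^ n)
          ≤ ∑ J ∈ famF n j, (pmeas μ n (shortSet n J)).toReal := by
      intro j hjm
      have hjle : j ≤ p n := by
        have := Finset.mem_range.mp hjm; omega
      calc (Nat.choose (n - 1) j : ℝ) * (1 - ρ ^ n)
          = ∑ _J ∈ famF n j, (1 - ρ ^ n) := by
            rw [Finset.sum_const, card_famF (by omega) j, nsmul_eq_mul]
        _ ≤ ∑ J ∈ famF n j, (pmeas μ n (shortSet n J)).toReal :=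
            Finset.sum_le_sum fun J hJ => hPlb j hjle J hJ
    have hE'lb : ∀ j ∈ Finset.range (p n + 1),
        0 ≤ ∑ J ∈ famF n (n - j - 2), (pmeas μ n (shortSet n J)).toReal :=
      fun j _ => Finset.sum_nonneg fun J _ => ENNReal.toReal_nonneg
    have hE'ub : ∀ j ∈ Finset.range (p n + 1),
        ∑ J ∈ famF n (n - j - 2), (pmeas μ n (shortSet n J)).toReal
          ≤ ((n:ℝ) * (Nat.choose (n - 1) j : ℝ)) * ρ ^ n := by
      intro j hjm
      have hjle : j ≤ p n := by
        have := Finset.mem_range.mp hjm; omega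
      have hNat : Nat.choose (n - 1) (n - j - 2) ≤ n * Nat.choose (n - 1) j := by
        have hjn1 : j + 1 ≤ n - 1 := by omega
        have hsym : Nat.choose (n - 1) (n - j - 2) = Nat.choose (n - 1) (j + 1) := by
          have hidx : n - j - 2 = (n - 1) - (j + 1) := by omega
          rw [hidx, Nat.choose_symm hjn1]
        calc Nat.choose (n - 1) (n - j - 2) = Nat.choose (n - 1) (j + 1) := hsym
          _ ≤ Nat.choose (n - 1) (j + 1) * (j + 1) :=
              Nat.le_mul_of_pos_right _ (by omega)
          _ = Nat.choose (n - 1) j * ((n - 1) - j) := Nat.choose_succ_right_eq (n - 1) j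
          _ ≤ Nat.choose (n - 1) j * n := Nat.mul_le_mul_left _ (by omega)
          _ = n * Nat.choose (n - 1) j := Nat.mul_comm _ _
      have hcard2 : ((famF n (n - j - 2)).card : ℝ) ≤ (n:ℝ) * (Nat.choose (n - 1) j : ℝ) := by
        rw [card_famF (by omega) (n - j - 2)]
        exact_mod_cast hNat
      calc ∑ J ∈ famF n (n - j - 2), (pmeas μ n (shortSet n J)).toReal
          ≤ ∑ _J ∈ famF n (n - j - 2), ρ ^ n :=
            Finset.sum_le_sum fun J hJ => hPub j hjle J hJ
        _ = ((famF n (n - j - 2)).card : ℝ) * ρ ^ n := by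
            rw [Finset.sum_const, nsmul_eq_mul]
        _ ≤ ((n:ℝ) * (Nat.choose (n - 1) j : ℝ)) * ρ ^ n :=
            mul_le_mul_of_nonneg_right hcard2 (by positivity)
    have hNum : ∫ ℓ, bSpatial n (p n) ℓ ∂(pmeas μ n)
        = ∑ j ∈ Finset.range (p n + 1),
            ((∑ J ∈ famF n j, (pmeas μ n (shortSet n J)).toReal)
              - ∑ J ∈ famF n (n - j - 2), (pmeas μ n (shortSet n J)).toReal) := by
      calc ∫ ℓ, bSpatial n (p n) ℓ ∂(pmeas μ n)
          = ∑ j ∈ Finset.range (p n + 1), ∫ ℓ,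
              ((hatACount n j ℓ : ℝ) - (hatACount n (n - j - 2) ℓ : ℝ)) ∂(pmeas μ n) := by
            rw [← integral_finset_sum (Finset.range (p n + 1))
              (f := fun j ℓ => ((hatACount n j ℓ : ℝ) - (hatACount n (n - j - 2) ℓ : ℝ)))
              (fun j _ =>
                ((integrable_hatACount μ n j).sub (integrable_hatACount μ n (n - j - 2))))]
            rfl
        _ = _ := by
            refine Finset.sum_congr rfl fun j _ => ?_
            rw [integral_sub (integrable_hatACount μ n j)
              (integrable_hatACount μ n (n - j - 2)),
              integral_hatACount, integral_hatACount]
    have hNumUB : ∫ ℓ, bSpatial n (p n) ℓ ∂(pmeas μ n) ≤ D := by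
      rw [hNum, hD_def]
      refine Finset.sum_le_sum fun j hj => ?_
      have h1 := hEub j hj
      have h2 := hE'lb j hj
      linarith
    have hNumLB : D * (1 - ((n:ℝ) + 1) * ρ ^ n)
        ≤ ∫ ℓ, bSpatial n (p n) ℓ ∂(pmeas μ n) := by
      rw [hNum, hD_def, Finset.sum_mul]
      refine Finset.sum_le_sum fun j hj => ?_
      have h1 := hElb j hj
      have h2 := hE'ub j hj
      have hexpand : (Nat.choose (n - 1) j : ℝ) * (1 - ((n:ℝ) + 1) * ρ ^ n)
          = (Nat.choose (n - 1) j : ℝ) * (1 - ρ ^ n)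
            - ((n:ℝ) * (Nat.choose (n - 1) j : ℝ)) * ρ ^ n := by ring
      rw [hexpand]
      linarith
    constructor
    · rw [le_div_iff₀ hD0]
      calc (1 - ((n:ℝ) + 1) * ρ ^ n) * D = D * (1 - ((n:ℝ) + 1) * ρ ^ n) := mul_comm _ _
        _ ≤ _ := hNumLB
    · rw [div_le_one hD0]
      exact hNumUB
  have hlow : Tendsto (fun n : ℕ => 1 - ((n:ℝ) + 1) * ρ ^ n) atTop (nhds 1) := by
    have h1 := tendsto_aux hρ0 hρ1
    have h2 := (tendsto_const_nhds (x := (1:ℝ)) (f := atTop)).sub h1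
    simpa using h2
  exact tendsto_of_tendsto_of_tendsto_of_le_of_le' hlow tendsto_const_nhds
    (hmain.mono fun n hn => hn.1) (hmain.mono fun n hn => hn.2)
end
end

section
/- For every t > 0 with t ≠ 1, the mean Poincaré polynomial of the planar polygon space satisfies μ_n[p_{M_ℓ}(t)] / (1+t)^{n−1} → min(1, t^{−2}) as n → ∞. In particular, μ_n[p_{M_ℓ}(t)] ∼ (1+t)^{n−1} for 0 < t < 1 and μ_n[p_{M_ℓ}(t)] ∼ (1+t)^{n−1} t^{−2} for t > 1. -/
open MeasureTheory Filter Finset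

noncomputable section

/-! ### Auxiliary counting lemmas -/

open Classical in
lemma natCard_subtype_eq {α : Type*} [Fintype α] (Q : α → Prop) :
    Nat.card {x // Q x} = (Finset.univ.filter Q).card := by
  rw [Nat.card_eq_fintype_card, Fintype.card_subtype]

lemma card_filter_card_mem {n p : ℕ} (i₀ : Fin n) :
    ((Finset.univ : Finset (Finset (Fin n))).filter
      (fun J => J.card = p + 1 ∧ i₀ ∈ J)).card = (n - 1).choose p := by
  classical
  have h1 : ((Finset.univ.erase i₀).powersetCard p).card = (n - 1).choose p := by
    rw [Finset.card_powersetCard, Finset.card_erase_of_mem (Finset.mem_univ _),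
      Finset.card_univ, Fintype.card_fin]
  rw [← h1]
  apply Finset.card_bij' (fun J (_ : J ∈ Finset.univ.filter
      (fun J => J.card = p + 1 ∧ i₀ ∈ J)) => J.erase i₀)
    (fun K (_ : K ∈ (Finset.univ.erase i₀).powersetCard p) => insert i₀ K)
  · intro J hJ
    simp only [Finset.mem_filter, Finset.mem_univ, true_and] at hJ
    rw [Finset.mem_powersetCard]
    refine ⟨fun x hx => Finset.mem_erase.mpr ⟨(Finset.mem_erase.mp hx).1, Finset.mem_univ _⟩, ?_⟩
    rw [Finset.card_erase_of_mem hJ.2, hJ.1]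
    omega
  · intro K hK
    rw [Finset.mem_powersetCard] at hK
    have hi : i₀ ∉ K := fun h => (Finset.mem_erase.mp (hK.1 h)).1 rfl
    simp only [Finset.mem_filter, Finset.mem_univ, true_and]
    exact ⟨by rw [Finset.card_insert_of_notMem hi, hK.2], Finset.mem_insert_self _ _⟩
  · intro J hJ
    simp only [Finset.mem_filter, Finset.mem_univ, true_and] at hJ
    exact Finset.insert_erase hJ.2
  · intro K hK
    rw [Finset.mem_powersetCard] at hK
    exact Finset.erase_insert (fun h => (Finset.mem_erase.mp (hK.1 h)).1 rfl)

lemma maxIdx_spec {n : ℕ} (hn : 0 < n) (ℓ : Fin n → ℝ) :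
    ∃ h : maxIdx n ℓ < n, ∀ j : Fin n, ℓ j ≤ ℓ ⟨maxIdx n ℓ, h⟩ := by
  obtain ⟨i, -, hi⟩ := Finset.exists_max_image (Finset.univ : Finset (Fin n)) ℓ
    ⟨⟨0, hn⟩, Finset.mem_univ _⟩
  have hne : {i : ℕ | ∃ h : i < n, ∀ j : Fin n, ℓ j ≤ ℓ ⟨i, h⟩}.Nonempty :=
    ⟨(i : ℕ), i.isLt, fun j => by simpa using hi j (Finset.mem_univ j)⟩
  exact Nat.sInf_mem hne

/-- number of subsets of given cardinality whose complement-sum is `≤` their sum -/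
def cntGE (n k : ℕ) (ℓ : Fin n → ℝ) : ℕ :=
  Nat.card {J : Finset (Fin n) // J.card = k ∧ ∑ j ∈ Jᶜ, ℓ j ≤ ∑ j ∈ J, ℓ j}

/-- number of subsets of given cardinality whose sum is `≤` their complement-sum -/
def cntLE (n k : ℕ) (ℓ : Fin n → ℝ) : ℕ :=
  Nat.card {J : Finset (Fin n) // J.card = k ∧ ∑ j ∈ J, ℓ j ≤ ∑ j ∈ Jᶜ, ℓ j}

lemma mem_iff_i₀ {n : ℕ} {ℓ : Fin n → ℝ} {h : maxIdx n ℓ < n} (J : Finset (Fin n)) :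
    (∃ i ∈ J, (i : ℕ) = maxIdx n ℓ) ↔ (⟨maxIdx n ℓ, h⟩ : Fin n) ∈ J := by
  constructor
  · rintro ⟨i, hiJ, hieq⟩
    have : i = (⟨maxIdx n ℓ, h⟩ : Fin n) := Fin.ext (by simpa using hieq)
    rwa [← this]
  · intro hmem; exact ⟨_, hmem, rfl⟩

lemma aCount_add_medCount_le {n p : ℕ} (hn : 0 < n) (ℓ : Fin n → ℝ) :
    aCount n p ℓ + medCount n p ℓ ≤ (n - 1).choose p := by
  classical
  obtain ⟨hlt, -⟩ := maxIdx_spec hn ℓ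
  rw [aCount, medCount, natCard_subtype_eq, natCard_subtype_eq]
  rw [← card_filter_card_mem (p := p) (⟨maxIdx n ℓ, hlt⟩ : Fin n)]
  rw [← Finset.card_union_of_disjoint ?hdisj]
  case hdisj =>
    rw [Finset.disjoint_left]
    intro J hJ hJ'
    simp only [Finset.mem_filter] at hJ hJ'
    exact (hJ.2.2.2.ne hJ'.2.2.2).elim
  apply Finset.card_le_card
  intro J hJ
  rcases Finset.mem_union.mp hJ with h | h <;>
    simp only [Finset.mem_filter, Finset.mem_univ, true_and] at h ⊢ <;>
    exact ⟨h.1, (mem_iff_i₀ (h := hlt) J).mp h.2.1⟩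

lemma choose_le_aCount_add_cntGE {n p : ℕ} (hn : 0 < n) (ℓ : Fin n → ℝ) :
    (n - 1).choose p ≤ aCount n p ℓ + cntGE n (p + 1) ℓ := by
  classical
  obtain ⟨hlt, -⟩ := maxIdx_spec hn ℓ
  rw [aCount, cntGE, natCard_subtype_eq, natCard_subtype_eq]
  rw [← card_filter_card_mem (p := p) (⟨maxIdx n ℓ, hlt⟩ : Fin n)]
  refine le_trans (Finset.card_le_card ?_) (Finset.card_union_le _ _)
  intro J hJ
  simp only [Finset.mem_filter, Finset.mem_univ, true_and] at hJ
  by_cases hs : ∑ j ∈ J, ℓ j < ∑ j ∈ Jᶜ, ℓ j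
  · exact Finset.mem_union_left _ (by
      simp only [Finset.mem_filter, Finset.mem_univ, true_and]
      exact ⟨hJ.1, (mem_iff_i₀ (h := hlt) J).mpr hJ.2, hs⟩)
  · exact Finset.mem_union_right _ (by
      simp only [Finset.mem_filter, Finset.mem_univ, true_and]
      exact ⟨hJ.1, le_of_not_gt hs⟩)

lemma aCount_add_medCount_le_cntLE {n p : ℕ} (ℓ : Fin n → ℝ) :
    aCount n p ℓ + medCount n p ℓ ≤ cntLE n (p + 1) ℓ := by
  classical
  rw [aCount, medCount, cntLE, natCard_subtype_eq, natCard_subtype_eq, natCard_subtype_eq]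
  rw [← Finset.card_union_of_disjoint ?hdisj]
  case hdisj =>
    rw [Finset.disjoint_left]
    intro J hJ hJ'
    simp only [Finset.mem_filter] at hJ hJ'
    exact (hJ.2.2.2.ne hJ'.2.2.2).elim
  apply Finset.card_le_card
  intro J hJ
  rcases Finset.mem_union.mp hJ with h | h <;>
    simp only [Finset.mem_filter, Finset.mem_univ, true_and] at h ⊢
  · exact ⟨h.1, le_of_lt h.2.2⟩
  · exact ⟨h.1, le_of_eq h.2.2⟩

lemma aCount_le_cntLE {n p : ℕ} (ℓ : Fin n → ℝ) :
    aCount n p ℓ ≤ cntLE n (p + 1) ℓ := by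
  classical
  rw [aCount, cntLE, natCard_subtype_eq, natCard_subtype_eq]
  apply Finset.card_le_card
  intro J hJ
  simp only [Finset.mem_filter, Finset.mem_univ, true_and] at hJ ⊢
  exact ⟨hJ.1, le_of_lt hJ.2.2⟩
/-! ### Measurability -/

lemma measurable_finsetSum {n : ℕ} (J : Finset (Fin n)) :
    Measurable fun ℓ : Fin n → ℝ => ∑ j ∈ J, ℓ j :=
  Finset.measurable_sum J fun j _ => measurable_pi_apply j

lemma measurableSet_maxIdx_eq {n k : ℕ} (hk : k < n) :
    MeasurableSet {ℓ : Fin n → ℝ | maxIdx n ℓ = k} := by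
  have hset : {ℓ : Fin n → ℝ | maxIdx n ℓ = k} =
      {ℓ : Fin n → ℝ | ∀ j, ℓ j ≤ ℓ ⟨k, hk⟩} ∩
        ⋂ (j : Fin n) (_ : (j : ℕ) < k), {ℓ : Fin n → ℝ | ∀ i, ℓ i ≤ ℓ j}ᶜ := by
    ext ℓ
    simp only [Set.mem_setOf_eq, Set.mem_inter_iff, Set.mem_iInter, Set.mem_compl_iff]
    constructor
    · intro h
      obtain ⟨hlt, hmax⟩ := maxIdx_spec (k.zero_le.trans_lt hk) ℓ
      subst h
      refine ⟨fun j => hmax j, fun j hj hall => ?_⟩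
      exact absurd
        (⟨j.isLt, fun i => by simpa using hall i⟩ :
          (j : ℕ) ∈ {i : ℕ | ∃ h : i < n, ∀ j' : Fin n, ℓ j' ≤ ℓ ⟨i, h⟩})
        (Nat.notMem_of_lt_sInf hj)
    · rintro ⟨hmem, hlt2⟩
      have hkS : k ∈ {i : ℕ | ∃ h : i < n, ∀ j : Fin n, ℓ j ≤ ℓ ⟨i, h⟩} := ⟨hk, hmem⟩
      refine le_antisymm (Nat.sInf_le hkS) (le_of_not_gt fun hlt3 => ?_)
      obtain ⟨h', hmax'⟩ := Nat.sInf_mem (⟨k, hkS⟩ : Set.Nonempty _)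
      exact hlt2 ⟨_, h'⟩ hlt3 fun i => hmax' i
  rw [hset]
  have hMi : ∀ i : Fin n, MeasurableSet {ℓ : Fin n → ℝ | ∀ j, ℓ j ≤ ℓ i} := by
    intro i
    have : {ℓ : Fin n → ℝ | ∀ j, ℓ j ≤ ℓ i} = ⋂ j, {ℓ : Fin n → ℝ | ℓ j ≤ ℓ i} := by
      ext ℓ; simp
    rw [this]
    exact MeasurableSet.iInter fun j =>
      measurableSet_le (measurable_pi_apply j) (measurable_pi_apply i)
  exact (hMi ⟨k, hk⟩).inter
    (MeasurableSet.iInter fun j => MeasurableSet.iInter fun _ => (hMi j).compl)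

lemma measurableSet_existsMax {n : ℕ} (J : Finset (Fin n)) :
    MeasurableSet {ℓ : Fin n → ℝ | ∃ i ∈ J, (i : ℕ) = maxIdx n ℓ} := by
  have : {ℓ : Fin n → ℝ | ∃ i ∈ J, (i : ℕ) = maxIdx n ℓ}
      = ⋃ i ∈ J, {ℓ : Fin n → ℝ | maxIdx n ℓ = (i : ℕ)} := by
    ext ℓ
    simp only [Set.mem_setOf_eq, Set.mem_iUnion]
    constructor
    · rintro ⟨i, hi, he⟩; exact ⟨i, hi, he.symm⟩
    · rintro ⟨i, hi, he⟩; exact ⟨i, hi, he.symm⟩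
  rw [this]
  exact MeasurableSet.iUnion fun i =>
    MeasurableSet.iUnion fun _ => measurableSet_maxIdx_eq i.isLt

lemma measurableSet_PA {n p : ℕ} (J : Finset (Fin n)) :
    MeasurableSet {ℓ : Fin n → ℝ | J.card = p + 1 ∧ (∃ i ∈ J, (i : ℕ) = maxIdx n ℓ) ∧
      ∑ j ∈ J, ℓ j < ∑ j ∈ Jᶜ, ℓ j} := by
  by_cases hc : J.card = p + 1
  · have : {ℓ : Fin n → ℝ | J.card = p + 1 ∧ (∃ i ∈ J, (i : ℕ) = maxIdx n ℓ) ∧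
        ∑ j ∈ J, ℓ j < ∑ j ∈ Jᶜ, ℓ j} = {ℓ : Fin n → ℝ | ∃ i ∈ J, (i : ℕ) = maxIdx n ℓ} ∩
        {ℓ : Fin n → ℝ | ∑ j ∈ J, ℓ j < ∑ j ∈ Jᶜ, ℓ j} := by
      ext ℓ; simp [hc]
    rw [this]
    exact (measurableSet_existsMax J).inter
      (measurableSet_lt (measurable_finsetSum J) (measurable_finsetSum Jᶜ))
  · have : {ℓ : Fin n → ℝ | J.card = p + 1 ∧ (∃ i ∈ J, (i : ℕ) = maxIdx n ℓ) ∧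
        ∑ j ∈ J, ℓ j < ∑ j ∈ Jᶜ, ℓ j} = ∅ := by
      ext ℓ; simp [hc]
    rw [this]; exact MeasurableSet.empty

lemma measurableSet_PM {n p : ℕ} (J : Finset (Fin n)) :
    MeasurableSet {ℓ : Fin n → ℝ | J.card = p + 1 ∧ (∃ i ∈ J, (i : ℕ) = maxIdx n ℓ) ∧
      ∑ j ∈ J, ℓ j = ∑ j ∈ Jᶜ, ℓ j} := by
  by_cases hc : J.card = p + 1
  · have : {ℓ : Fin n → ℝ | J.card = p + 1 ∧ (∃ i ∈ J, (i : ℕ) = maxIdx n ℓ) ∧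
        ∑ j ∈ J, ℓ j = ∑ j ∈ Jᶜ, ℓ j} = {ℓ : Fin n → ℝ | ∃ i ∈ J, (i : ℕ) = maxIdx n ℓ} ∩
        {ℓ : Fin n → ℝ | ∑ j ∈ J, ℓ j = ∑ j ∈ Jᶜ, ℓ j} := by
      ext ℓ; simp [hc]
    rw [this]
    exact (measurableSet_existsMax J).inter
      (measurableSet_eq_fun (measurable_finsetSum J) (measurable_finsetSum Jᶜ))
  · have : {ℓ : Fin n → ℝ | J.card = p + 1 ∧ (∃ i ∈ J, (i : ℕ) = maxIdx n ℓ) ∧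
        ∑ j ∈ J, ℓ j = ∑ j ∈ Jᶜ, ℓ j} = ∅ := by
      ext ℓ; simp [hc]
    rw [this]; exact MeasurableSet.empty

lemma measurableSet_PGE {n k : ℕ} (J : Finset (Fin n)) :
    MeasurableSet {ℓ : Fin n → ℝ | J.card = k ∧ ∑ j ∈ Jᶜ, ℓ j ≤ ∑ j ∈ J, ℓ j} := by
  by_cases hc : J.card = k
  · have : {ℓ : Fin n → ℝ | J.card = k ∧ ∑ j ∈ Jᶜ, ℓ j ≤ ∑ j ∈ J, ℓ j}
        = {ℓ : Fin n → ℝ | ∑ j ∈ Jᶜ, ℓ j ≤ ∑ j ∈ J, ℓ j} := by ext ℓ; simp [hc]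
    rw [this]
    exact measurableSet_le (measurable_finsetSum Jᶜ) (measurable_finsetSum J)
  · have : {ℓ : Fin n → ℝ | J.card = k ∧ ∑ j ∈ Jᶜ, ℓ j ≤ ∑ j ∈ J, ℓ j} = ∅ := by
      ext ℓ; simp [hc]
    rw [this]; exact MeasurableSet.empty

lemma measurableSet_PLE {n k : ℕ} (J : Finset (Fin n)) :
    MeasurableSet {ℓ : Fin n → ℝ | J.card = k ∧ ∑ j ∈ J, ℓ j ≤ ∑ j ∈ Jᶜ, ℓ j} := by
  by_cases hc : J.card = k
  · have : {ℓ : Fin n → ℝ | J.card = k ∧ ∑ j ∈ J, ℓ j ≤ ∑ j ∈ Jᶜ, ℓ j}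
        = {ℓ : Fin n → ℝ | ∑ j ∈ J, ℓ j ≤ ∑ j ∈ Jᶜ, ℓ j} := by ext ℓ; simp [hc]
    rw [this]
    exact measurableSet_le (measurable_finsetSum J) (measurable_finsetSum Jᶜ)
  · have : {ℓ : Fin n → ℝ | J.card = k ∧ ∑ j ∈ J, ℓ j ≤ ∑ j ∈ Jᶜ, ℓ j} = ∅ := by
      ext ℓ; simp [hc]
    rw [this]; exact MeasurableSet.empty

/-! ### Counting functions as sums of indicators -/

lemma natCardCount_eq_sum_indicator {n : ℕ} (P : Finset (Fin n) → (Fin n → ℝ) → Prop)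
    (ℓ : Fin n → ℝ) :
    ((Nat.card {J : Finset (Fin n) // P J ℓ} : ℝ))
      = ∑ J : Finset (Fin n), Set.indicator {ℓ' | P J ℓ'} (fun _ => (1 : ℝ)) ℓ := by
  classical
  rw [natCard_subtype_eq, Finset.card_filter]
  push_cast
  apply Finset.sum_congr rfl
  intro J _
  by_cases h : P J ℓ <;> simp [Set.indicator_apply, h]

lemma integrable_natCardCount {n : ℕ} (ν : Measure (Fin n → ℝ)) [IsFiniteMeasure ν]
    (P : Finset (Fin n) → (Fin n → ℝ) → Prop) (hP : ∀ J, MeasurableSet {ℓ | P J ℓ}) :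
    Integrable (fun ℓ => (Nat.card {J : Finset (Fin n) // P J ℓ} : ℝ)) ν := by
  have heq : (fun ℓ => (Nat.card {J : Finset (Fin n) // P J ℓ} : ℝ))
      = fun ℓ => ∑ J : Finset (Fin n), Set.indicator {ℓ' | P J ℓ'} (fun _ => (1 : ℝ)) ℓ :=
    funext (natCardCount_eq_sum_indicator P)
  rw [heq]
  exact integrable_finset_sum _ fun J _ => (integrable_const (1 : ℝ)).indicator (hP J)

lemma integral_natCardCount {n : ℕ} (ν : Measure (Fin n → ℝ)) [IsFiniteMeasure ν]
    (P : Finset (Fin n) → (Fin n → ℝ) → Prop) (hP : ∀ J, MeasurableSet {ℓ | P J ℓ}) :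
    ∫ ℓ, (Nat.card {J : Finset (Fin n) // P J ℓ} : ℝ) ∂ν
      = ∑ J : Finset (Fin n), (ν {ℓ | P J ℓ}).toReal := by
  have heq : (fun ℓ => (Nat.card {J : Finset (Fin n) // P J ℓ} : ℝ))
      = fun ℓ => ∑ J : Finset (Fin n), Set.indicator {ℓ' | P J ℓ'} (fun _ => (1 : ℝ)) ℓ :=
    funext (natCardCount_eq_sum_indicator P)
  rw [heq, integral_finset_sum _ fun J _ => (integrable_const (1 : ℝ)).indicator (hP J)]
  apply Finset.sum_congr rfl
  intro J _
  rw [integral_indicator_const (1 : ℝ) (hP J), smul_eq_mul, mul_one]; rfl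
/-! ### Chernoff bound -/

instance pmeas_prob (μ : Measure ℝ) [IsProbabilityMeasure μ] (n : ℕ) :
    IsProbabilityMeasure (pmeas μ n) := by
  unfold pmeas; infer_instance

lemma integral_pi_prod {n : ℕ} (μ : Measure ℝ) [IsProbabilityMeasure μ]
    (g : Fin n → ℝ → ℝ) :
    ∫ ℓ, ∏ i, g i (ℓ i) ∂(pmeas μ n) = ∏ i, ∫ x, g i x ∂μ := by
  letI : MeasureSpace ℝ := ⟨μ⟩
  haveI : SigmaFinite (volume : Measure ℝ) := (inferInstance : SigmaFinite μ)
  exact MeasureTheory.integral_fintype_prod_eq_prod (fun i => g i)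

lemma integrable_pi_prod {n : ℕ} (μ : Measure ℝ) [IsProbabilityMeasure μ]
    (g : Fin n → ℝ → ℝ) (hg : ∀ i, Integrable (g i) μ) :
    Integrable (fun ℓ => ∏ i, g i (ℓ i)) (pmeas μ n) := by
  letI : MeasureSpace ℝ := ⟨μ⟩
  haveI : SigmaFinite (volume : Measure ℝ) := (inferInstance : SigmaFinite μ)
  exact Integrable.fintype_prod hg

lemma chernoff_GE {n : ℕ} (μ : Measure ℝ) [IsProbabilityMeasure μ] (J : Finset (Fin n))
    (lam : ℝ) (hlam : 0 ≤ lam)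
    (h1 : Integrable (fun x => Real.exp (lam * x)) μ)
    (h2 : Integrable (fun x => Real.exp (-lam * x)) μ) :
    ((pmeas μ n) {ℓ | ∑ j ∈ Jᶜ, ℓ j ≤ ∑ j ∈ J, ℓ j}).toReal
      ≤ (∫ x, Real.exp (lam * x) ∂μ) ^ J.card
        * (∫ x, Real.exp (-lam * x) ∂μ) ^ (n - J.card) := by
  classical
  set g : Fin n → ℝ → ℝ :=
    fun i x => if i ∈ J then Real.exp (lam * x) else Real.exp (-lam * x) with hg
  have hgint : ∀ i, Integrable (g i) μ := by
    intro i; by_cases h : i ∈ J <;> simp only [hg, h, if_true, if_false] <;> [exact h1; exact h2]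
  have hfint : Integrable (fun ℓ => ∏ i, g i (ℓ i)) (pmeas μ n) := integrable_pi_prod μ g hgint
  have hmeas : MeasurableSet {ℓ : Fin n → ℝ | ∑ j ∈ Jᶜ, ℓ j ≤ ∑ j ∈ J, ℓ j} :=
    measurableSet_le (measurable_finsetSum Jᶜ) (measurable_finsetSum J)
  have hprod : ∀ ℓ : Fin n → ℝ,
      ∏ i, g i (ℓ i) = Real.exp (lam * (∑ j ∈ J, ℓ j - ∑ j ∈ Jᶜ, ℓ j)) := by
    intro ℓ
    rw [← Finset.prod_mul_prod_compl J (fun i => g i (ℓ i))]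
    have h1' : ∏ i ∈ J, g i (ℓ i) = Real.exp (∑ i ∈ J, lam * ℓ i) := by
      rw [Real.exp_sum]; exact Finset.prod_congr rfl fun i hi => by simp [hg, hi]
    have h2' : ∏ i ∈ Jᶜ, g i (ℓ i) = Real.exp (∑ i ∈ Jᶜ, -(lam * ℓ i)) := by
      rw [Real.exp_sum]
      refine Finset.prod_congr rfl fun i hi => ?_
      rw [Finset.mem_compl] at hi
      simp only [hg, if_neg hi, neg_mul]
    rw [h1', h2', ← Real.exp_add, ← Finset.mul_sum, Finset.sum_neg_distrib, ← Finset.mul_sum]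
    ring_nf
  have hind : ∀ ℓ, Set.indicator {ℓ' : Fin n → ℝ | ∑ j ∈ Jᶜ, ℓ' j ≤ ∑ j ∈ J, ℓ' j}
      (fun _ => (1 : ℝ)) ℓ ≤ ∏ i, g i (ℓ i) := by
    intro ℓ
    by_cases hin : ℓ ∈ {ℓ' : Fin n → ℝ | ∑ j ∈ Jᶜ, ℓ' j ≤ ∑ j ∈ J, ℓ' j}
    · rw [Set.indicator_of_mem hin, hprod ℓ, show (1 : ℝ) = Real.exp 0 from Real.exp_zero.symm]
      exact Real.exp_le_exp.mpr (mul_nonneg hlam (sub_nonneg.mpr hin))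
    · rw [Set.indicator_of_notMem hin, hprod ℓ]
      exact (Real.exp_pos _).le
  have step1 : ((pmeas μ n) {ℓ | ∑ j ∈ Jᶜ, ℓ j ≤ ∑ j ∈ J, ℓ j}).toReal
      = ∫ ℓ, Set.indicator {ℓ' : Fin n → ℝ | ∑ j ∈ Jᶜ, ℓ' j ≤ ∑ j ∈ J, ℓ' j}
          (fun _ => (1 : ℝ)) ℓ ∂(pmeas μ n) := by
    rw [integral_indicator_const (1 : ℝ) hmeas, smul_eq_mul, mul_one]; rfl
  rw [step1]
  refine le_trans (integral_mono ((integrable_const (1 : ℝ)).indicator hmeas) hfint hind) ?_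
  rw [integral_pi_prod]
  have : ∀ i : Fin n, ∫ x, g i x ∂μ = if i ∈ J then (∫ x, Real.exp (lam * x) ∂μ)
      else (∫ x, Real.exp (-lam * x) ∂μ) := by
    intro i; by_cases h : i ∈ J <;> simp [hg, h]
  rw [Finset.prod_congr rfl fun i _ => this i,
    ← Finset.prod_mul_prod_compl J (fun i => if i ∈ J then (∫ x, Real.exp (lam * x) ∂μ)
      else (∫ x, Real.exp (-lam * x) ∂μ))]
  rw [Finset.prod_congr rfl fun i (hi : i ∈ J) => if_pos hi,
    Finset.prod_congr rfl fun i (hi : i ∈ Jᶜ) => if_neg (Finset.mem_compl.mp hi),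
    Finset.prod_const, Finset.prod_const, Finset.card_compl, Fintype.card_fin]
/-! ### Moment generating function bounds -/

section MGF

variable {μ : Measure ℝ} [IsProbabilityMeasure μ]

lemma ae_pos (hsupp : μ (Set.Ioi (0 : ℝ))ᶜ = 0) : ∀ᵐ x ∂μ, 0 < x := by
  rw [MeasureTheory.ae_iff]
  have : {x : ℝ | ¬ 0 < x} = (Set.Ioi (0 : ℝ))ᶜ := by ext x; simp [Set.mem_Ioi]
  rw [this]; exact hsupp

lemma integrable_exp_of_le (hsupp : μ (Set.Ioi (0 : ℝ))ᶜ = 0) {η lam : ℝ}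
    (hint : Integrable (fun x => Real.exp (η * x)) μ) (h0 : 0 ≤ lam) (h1 : lam ≤ η) :
    Integrable (fun x => Real.exp (lam * x)) μ := by
  refine hint.mono' ((Real.measurable_exp.comp (measurable_const.mul measurable_id)).aestronglyMeasurable) ?_
  filter_upwards [ae_pos hsupp] with x hx
  rw [Real.norm_eq_abs, abs_of_pos (Real.exp_pos _)]
  exact Real.exp_le_exp.mpr (mul_le_mul_of_nonneg_right h1 hx.le)

lemma integrable_exp_neg (hsupp : μ (Set.Ioi (0 : ℝ))ᶜ = 0) {lam : ℝ} (h0 : 0 ≤ lam) :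
    Integrable (fun x => Real.exp (-lam * x)) μ := by
  refine (integrable_const (1 : ℝ)).mono' ((Real.measurable_exp.comp (measurable_const.mul measurable_id)).aestronglyMeasurable) ?_
  filter_upwards [ae_pos hsupp] with x hx
  rw [Real.norm_eq_abs, abs_of_pos (Real.exp_pos _), show (1 : ℝ) = Real.exp 0 from Real.exp_zero.symm]
  apply Real.exp_le_exp.mpr
  nlinarith [hx.le]

lemma integrable_id_of_exp (hsupp : μ (Set.Ioi (0 : ℝ))ᶜ = 0) {η : ℝ} (hη : 0 < η)
    (hint : Integrable (fun x => Real.exp (η * x)) μ) :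
    Integrable (fun x => x) μ := by
  refine ((hint.const_mul (1 / η)).mono' measurable_id.aestronglyMeasurable ?_)
  filter_upwards [ae_pos hsupp] with x hx
  rw [Real.norm_eq_abs, abs_of_pos hx]
  have h := Real.add_one_le_exp (η * x)
  have hle : η * x ≤ Real.exp (η * x) := by linarith
  calc x = (η * x) / η := by field_simp
    _ ≤ Real.exp (η * x) / η := by gcongr
    _ = 1 / η * Real.exp (η * x) := by ring

lemma integrable_sq_exp (hsupp : μ (Set.Ioi (0 : ℝ))ᶜ = 0) {η : ℝ} (hη : 0 < η)
    (hint : Integrable (fun x => Real.exp (η * x)) μ) :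
    Integrable (fun x => x ^ 2 * Real.exp ((η / 2) * x)) μ := by
  refine ((hint.const_mul (16 / η ^ 2)).mono'
    ((measurable_id.pow_const 2).mul
      (Real.measurable_exp.comp (measurable_const.mul measurable_id))).aestronglyMeasurable ?_)
  filter_upwards [ae_pos hsupp] with x hx
  have hsq : x ^ 2 ≤ 16 / η ^ 2 * Real.exp ((η / 2) * x) := by
    have h1 : η / 4 * x ≤ Real.exp (η / 4 * x) := by
      have := Real.add_one_le_exp (η / 4 * x); linarith
    have h2 : Real.exp (η / 4 * x) * Real.exp (η / 4 * x) = Real.exp ((η / 2) * x) := by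
      rw [← Real.exp_add]; congr 1; ring
    have h3 : (η / 4 * x) * (η / 4 * x) ≤ Real.exp ((η / 2) * x) := by
      rw [← h2]
      apply mul_le_mul h1 h1 (by positivity) (Real.exp_pos _).le
    have hη2 : (0:ℝ) < η ^ 2 := by positivity
    rw [div_mul_eq_mul_div, le_div_iff₀ hη2]
    nlinarith
  have hepos := (Real.exp_pos ((η / 2) * x)).le
  rw [Real.norm_eq_abs, abs_of_nonneg (by positivity)]
  calc x ^ 2 * Real.exp ((η / 2) * x)
      ≤ (16 / η ^ 2 * Real.exp ((η / 2) * x)) * Real.exp ((η / 2) * x) :=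
        mul_le_mul_of_nonneg_right hsq hepos
    _ = 16 / η ^ 2 * (Real.exp ((η / 2) * x) * Real.exp ((η / 2) * x)) := by ring
    _ = 16 / η ^ 2 * Real.exp (η * x) := by
        rw [← Real.exp_add]; congr 2; ring

lemma mean_pos (hsupp : μ (Set.Ioi (0 : ℝ))ᶜ = 0) (hid : Integrable (fun x => x) μ) :
    0 < ∫ x, x ∂μ := by
  rw [integral_pos_iff_support_of_nonneg_ae ?hae hid]
  case hae => filter_upwards [ae_pos hsupp] with x hx; exact hx.le
  have hsub : Set.Ioi (0:ℝ) ⊆ Function.support fun x => x := fun x hx => ne_of_gt hx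
  have h1 : μ (Set.Ioi (0:ℝ)) = 1 := by
    have := measure_add_measure_compl (μ := μ) (measurableSet_Ioi (a := (0:ℝ)))
    rw [hsupp, add_zero] at this
    rw [this, measure_univ]
  calc (0 : ENNReal) < 1 := by norm_num
    _ = μ (Set.Ioi (0:ℝ)) := h1.symm
    _ ≤ μ (Function.support fun x => x) := measure_mono hsub

lemma exists_good_lam (hsupp : μ (Set.Ioi (0 : ℝ))ᶜ = 0)
    (hexp : ∃ η > 0, Integrable (fun x => Real.exp (η * x)) μ)
    {u : ℝ} (hu0 : 0 < u) (hu1 : u < 1) :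
    ∃ lam : ℝ, 0 < lam ∧ Integrable (fun x => Real.exp (lam * x)) μ ∧
      Integrable (fun x => Real.exp (-lam * x)) μ ∧
      u * (∫ x, Real.exp (lam * x) ∂μ) + (∫ x, Real.exp (-lam * x) ∂μ) < 1 + u := by
  obtain ⟨η, hη, hint⟩ := hexp
  have hid : Integrable (fun x => x) μ := integrable_id_of_exp hsupp hη hint
  have hsq : Integrable (fun x => x ^ 2 * Real.exp ((η / 2) * x)) μ :=
    integrable_sq_exp hsupp hη hint
  set m : ℝ := ∫ x, x ∂μ with hm
  set K : ℝ := (∫ x, x ^ 2 * Real.exp ((η / 2) * x) ∂μ) + 1 with hK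
  have hmpos : 0 < m := mean_pos hsupp hid
  have hKpos : 0 < K := by
    have : 0 ≤ ∫ x, x ^ 2 * Real.exp ((η / 2) * x) ∂μ :=
      integral_nonneg fun x => by positivity
    simp only [hK]; linarith
  set lam : ℝ := min (η / 2) ((1 - u) * m / (2 * (1 + u) * K)) with hlamdef
  have hlam0 : 0 < lam := by
    apply lt_min (by positivity)
    have : 0 < (1 - u) * m := by nlinarith
    positivity
  have hlamη2 : lam ≤ η / 2 := min_le_left _ _
  have hlamB : lam ≤ (1 - u) * m / (2 * (1 + u) * K) := min_le_right _ _
  have hlamη : lam ≤ η := le_trans hlamη2 (by linarith)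
  clear_value lam m K
  have hintlam : Integrable (fun x => Real.exp (lam * x)) μ :=
    integrable_exp_of_le hsupp hint hlam0.le hlamη
  have hintneg : Integrable (fun x => Real.exp (-lam * x)) μ :=
    integrable_exp_neg hsupp hlam0.le
  refine ⟨lam, hlam0, hintlam, hintneg, ?_⟩
  -- upper bound for φ
  have hphi : ∫ x, Real.exp (lam * x) ∂μ
      ≤ 1 + lam * m + lam ^ 2 * (K - 1) := by
    have hgint : Integrable (fun x => 1 + lam * x + lam ^ 2 * (x ^ 2 * Real.exp ((η / 2) * x))) μ := by
      exact ((integrable_const (1:ℝ)).add (hid.const_mul lam)).add (hsq.const_mul (lam ^ 2))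
    have hpt : ∀ᵐ x ∂μ, Real.exp (lam * x)
        ≤ 1 + lam * x + lam ^ 2 * (x ^ 2 * Real.exp ((η / 2) * x)) := by
      filter_upwards [ae_pos hsupp] with x hx
      set v := lam * x with hv
      have hv0 : 0 ≤ v := by positivity
      have hexpv : Real.exp v * (1 - v) ≤ 1 := by
        have h1 : 1 - v ≤ Real.exp (-v) := Real.one_sub_le_exp_neg v
        calc Real.exp v * (1 - v) ≤ Real.exp v * Real.exp (-v) :=
              mul_le_mul_of_nonneg_left h1 (Real.exp_pos _).le
          _ = 1 := by rw [← Real.exp_add]; simp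
      have hstep : Real.exp v ≤ 1 + v * Real.exp v := by nlinarith
      have hstep2 : Real.exp v ≤ 1 + v + v * (v * Real.exp v) := by nlinarith
      have hexpmono : Real.exp v ≤ Real.exp ((η / 2) * x) :=
        Real.exp_le_exp.mpr (mul_le_mul_of_nonneg_right hlamη2 hx.le)
      have : v * (v * Real.exp v) ≤ lam ^ 2 * (x ^ 2 * Real.exp ((η / 2) * x)) := by
        have h1 : v * (v * Real.exp v) = v ^ 2 * Real.exp v := by ring
        have h2 : lam ^ 2 * (x ^ 2 * Real.exp ((η/2)*x)) = v ^ 2 * Real.exp ((η/2)*x) := by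
          rw [hv]; ring
        rw [h1, h2]
        exact mul_le_mul_of_nonneg_left hexpmono (by positivity)
      linarith
    have hf1 : Integrable (fun x : ℝ => 1 + lam * x) μ :=
      (integrable_const (1:ℝ)).add (hid.const_mul lam)
    have hf2 : Integrable (fun x : ℝ => lam ^ 2 * (x ^ 2 * Real.exp ((η / 2) * x))) μ :=
      hsq.const_mul (lam ^ 2)
    calc ∫ x, Real.exp (lam * x) ∂μ
        ≤ ∫ x, (1 + lam * x + lam ^ 2 * (x ^ 2 * Real.exp ((η / 2) * x))) ∂μ :=
          integral_mono_ae hintlam hgint hpt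
      _ = 1 + lam * m + lam ^ 2 * (K - 1) := by
          rw [integral_add hf1 hf2, integral_add (integrable_const (1:ℝ)) (hid.const_mul lam),
            integral_const, integral_const_mul, integral_const_mul]
          simp [hK, hm]
  have hpsi : ∫ x, Real.exp (-lam * x) ∂μ
      ≤ 1 - lam * m + lam ^ 2 * (K - 1) := by
    have hgint : Integrable (fun x => 1 - lam * x + lam ^ 2 * (x ^ 2 * Real.exp ((η / 2) * x))) μ := by
      exact ((integrable_const (1:ℝ)).sub (hid.const_mul lam)).add (hsq.const_mul (lam ^ 2))
    have hpt : ∀ᵐ x ∂μ, Real.exp (-lam * x)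
        ≤ 1 - lam * x + lam ^ 2 * (x ^ 2 * Real.exp ((η / 2) * x)) := by
      filter_upwards [ae_pos hsupp] with x hx
      set v := lam * x with hv
      have hv0 : 0 ≤ v := by positivity
      have h1v : (0:ℝ) < 1 + v := by linarith
      have hA : Real.exp (-v) * (1 + v) ≤ 1 := by
        have h1 : v + 1 ≤ Real.exp v := Real.add_one_le_exp v
        calc Real.exp (-v) * (1 + v) ≤ Real.exp (-v) * Real.exp v :=
              mul_le_mul_of_nonneg_left (by linarith) (Real.exp_pos _).le
          _ = 1 := by rw [← Real.exp_add]; simp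
      have hB : Real.exp (-v) ≤ 1 - v + v ^ 2 := by
        have h2 : (1 - v + v ^ 2) * (1 + v) = 1 + v ^ 3 := by ring
        have h3 : Real.exp (-v) * (1 + v) ≤ (1 - v + v ^ 2) * (1 + v) := by
          rw [h2]; nlinarith
        exact le_of_mul_le_mul_right (by linarith [h3]) h1v
      have hC : v ^ 2 ≤ lam ^ 2 * (x ^ 2 * Real.exp ((η / 2) * x)) := by
        have h4 : (1:ℝ) ≤ Real.exp ((η / 2) * x) := by
          rw [show (1:ℝ) = Real.exp 0 from Real.exp_zero.symm]
          exact Real.exp_le_exp.mpr (by positivity)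
        have h5 : lam ^ 2 * (x ^ 2 * Real.exp ((η/2)*x)) = v ^ 2 * Real.exp ((η/2)*x) := by
          rw [hv]; ring
        rw [h5]; nlinarith
      have : -lam * x = -v := by rw [hv]; ring
      rw [this]; linarith
    have hf1 : Integrable (fun x : ℝ => 1 - lam * x) μ :=
      (integrable_const (1:ℝ)).sub (hid.const_mul lam)
    have hf2 : Integrable (fun x : ℝ => lam ^ 2 * (x ^ 2 * Real.exp ((η / 2) * x))) μ :=
      hsq.const_mul (lam ^ 2)
    calc ∫ x, Real.exp (-lam * x) ∂μ
        ≤ ∫ x, (1 - lam * x + lam ^ 2 * (x ^ 2 * Real.exp ((η / 2) * x))) ∂μ :=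
          integral_mono_ae hintneg hgint hpt
      _ = 1 - lam * m + lam ^ 2 * (K - 1) := by
          rw [integral_add hf1 hf2, integral_sub (integrable_const (1:ℝ)) (hid.const_mul lam),
            integral_const, integral_const_mul, integral_const_mul]
          simp [hK, hm]
  -- combine
  have hquad : (1 + u) * (K * lam) ≤ (1 - u) * m / 2 := by
    rw [le_div_iff₀ (by positivity : (0:ℝ) < 2 * (1 + u) * K)] at hlamB
    nlinarith
  have h1 : u * (∫ x, Real.exp (lam * x) ∂μ)
      ≤ u * (1 + lam * m + lam ^ 2 * (K - 1)) := mul_le_mul_of_nonneg_left hphi hu0.le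
  have h2 : (1 + u) * (K * lam) * lam ≤ (1 - u) * m / 2 * lam :=
    mul_le_mul_of_nonneg_right hquad hlam0.le
  have h5 : 0 ≤ (1 + u) * lam ^ 2 := by positivity
  have h4 : (1 + u) * lam ^ 2 * (K - 1) ≤ (1 - u) * m / 2 * lam := by nlinarith [h2, h5]
  have h3 : 0 < (1 - u) * m * lam := by
    apply mul_pos (mul_pos (by linarith) hmpos) hlam0
  nlinarith [h1, hpsi, h4, h3]

end MGF
/-! ### Expected counts -/

lemma card_filter_card_eq (n k : ℕ) :
    ((Finset.univ : Finset (Finset (Fin n))).filter fun J => J.card = k).card = n.choose k := by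
  classical
  have h : (Finset.univ : Finset (Finset (Fin n))).filter (fun J => J.card = k)
      = (Finset.univ : Finset (Fin n)).powersetCard k := by
    rw [Finset.powersetCard_eq_filter, Finset.powerset_univ]
  rw [h, Finset.card_powersetCard, Finset.card_univ, Fintype.card_fin]

lemma chernoff_LE {n : ℕ} (μ : Measure ℝ) [IsProbabilityMeasure μ] (J : Finset (Fin n))
    (lam : ℝ) (hlam : 0 ≤ lam)
    (h1 : Integrable (fun x => Real.exp (lam * x)) μ)
    (h2 : Integrable (fun x => Real.exp (-lam * x)) μ) :
    ((pmeas μ n) {ℓ | ∑ j ∈ J, ℓ j ≤ ∑ j ∈ Jᶜ, ℓ j}).toReal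
      ≤ (∫ x, Real.exp (lam * x) ∂μ) ^ (n - J.card)
        * (∫ x, Real.exp (-lam * x) ∂μ) ^ (n - (n - J.card)) := by
  have h := chernoff_GE μ Jᶜ lam hlam h1 h2
  rw [compl_compl] at h
  rwa [Finset.card_compl, Fintype.card_fin] at h

section ExpCounts

variable {μ : Measure ℝ} [IsProbabilityMeasure μ] {n : ℕ}

lemma integrable_cntGE (k : ℕ) : Integrable (fun ℓ => (cntGE n k ℓ : ℝ)) (pmeas μ n) := by
  unfold cntGE
  exact integrable_natCardCount _ _ fun J => measurableSet_PGE J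

lemma integrable_cntLE (k : ℕ) : Integrable (fun ℓ => (cntLE n k ℓ : ℝ)) (pmeas μ n) := by
  unfold cntLE
  exact integrable_natCardCount _ _ fun J => measurableSet_PLE J

lemma integrable_aCount (p : ℕ) : Integrable (fun ℓ => (aCount n p ℓ : ℝ)) (pmeas μ n) := by
  unfold aCount
  exact integrable_natCardCount _ _ fun J => measurableSet_PA J

lemma integrable_medCount (p : ℕ) :
    Integrable (fun ℓ => (medCount n p ℓ : ℝ)) (pmeas μ n) := by
  unfold medCount
  exact integrable_natCardCount _ _ fun J => measurableSet_PM J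

lemma poincareM_eq (t : ℝ) (ℓ : Fin n → ℝ) :
    poincareM n t ℓ = ∑ p ∈ Finset.range (n - 2),
      ((aCount n p ℓ : ℝ) + (medCount n p ℓ : ℝ) + (aCount n (n - 3 - p) ℓ : ℝ)) * t ^ p := by
  unfold poincareM
  refine Finset.sum_congr rfl fun p _ => ?_
  unfold bPlanar
  push_cast
  ring

lemma integrable_poincareM (t : ℝ) : Integrable (fun ℓ => poincareM n t ℓ) (pmeas μ n) := by
  have heq : (fun ℓ => poincareM n t ℓ) = fun ℓ => ∑ p ∈ Finset.range (n - 2),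
      ((aCount n p ℓ : ℝ) + (medCount n p ℓ : ℝ) + (aCount n (n - 3 - p) ℓ : ℝ)) * t ^ p :=
    funext fun ℓ => poincareM_eq t ℓ
  rw [heq]
  exact integrable_finset_sum _ fun p _ =>
    (((integrable_aCount p).add (integrable_medCount p)).add (integrable_aCount (n - 3 - p))).mul_const _

lemma integral_cntGE_le (k : ℕ) (lam : ℝ) (hlam : 0 ≤ lam)
    (h1 : Integrable (fun x => Real.exp (lam * x)) μ)
    (h2 : Integrable (fun x => Real.exp (-lam * x)) μ) :
    ∫ ℓ, (cntGE n k ℓ : ℝ) ∂(pmeas μ n)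
      ≤ (n.choose k : ℝ) * (∫ x, Real.exp (lam * x) ∂μ) ^ k
          * (∫ x, Real.exp (-lam * x) ∂μ) ^ (n - k) := by
  classical
  unfold cntGE
  rw [integral_natCardCount _ _ fun J => measurableSet_PGE J]
  have hbd : ∀ J : Finset (Fin n),
      ((pmeas μ n) {ℓ | J.card = k ∧ ∑ j ∈ Jᶜ, ℓ j ≤ ∑ j ∈ J, ℓ j}).toReal
        ≤ if J.card = k then (∫ x, Real.exp (lam * x) ∂μ) ^ k
            * (∫ x, Real.exp (-lam * x) ∂μ) ^ (n - k) else 0 := by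
    intro J
    by_cases hc : J.card = k
    · rw [if_pos hc]
      have hsub : {ℓ : Fin n → ℝ | J.card = k ∧ ∑ j ∈ Jᶜ, ℓ j ≤ ∑ j ∈ J, ℓ j}
          ⊆ {ℓ : Fin n → ℝ | ∑ j ∈ Jᶜ, ℓ j ≤ ∑ j ∈ J, ℓ j} := fun ℓ hℓ => hℓ.2
      refine le_trans (ENNReal.toReal_mono (measure_ne_top _ _) (measure_mono hsub)) ?_
      have := chernoff_GE μ J lam hlam h1 h2
      rwa [hc] at this
    · rw [if_neg hc]
      have hempty : {ℓ : Fin n → ℝ | J.card = k ∧ ∑ j ∈ Jᶜ, ℓ j ≤ ∑ j ∈ J, ℓ j} = ∅ := by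
        ext ℓ; simp [hc]
      rw [hempty]
      simp
  refine le_trans (Finset.sum_le_sum fun J _ => hbd J) ?_
  rw [← Finset.sum_filter, Finset.sum_const, card_filter_card_eq, nsmul_eq_mul]
  exact le_of_eq (by ring)

lemma integral_cntLE_le (k : ℕ) (hk : k ≤ n) (lam : ℝ) (hlam : 0 ≤ lam)
    (h1 : Integrable (fun x => Real.exp (lam * x)) μ)
    (h2 : Integrable (fun x => Real.exp (-lam * x)) μ) :
    ∫ ℓ, (cntLE n k ℓ : ℝ) ∂(pmeas μ n)
      ≤ (n.choose k : ℝ) * (∫ x, Real.exp (-lam * x) ∂μ) ^ k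
          * (∫ x, Real.exp (lam * x) ∂μ) ^ (n - k) := by
  classical
  unfold cntLE
  rw [integral_natCardCount _ _ fun J => measurableSet_PLE J]
  have hbd : ∀ J : Finset (Fin n),
      ((pmeas μ n) {ℓ | J.card = k ∧ ∑ j ∈ J, ℓ j ≤ ∑ j ∈ Jᶜ, ℓ j}).toReal
        ≤ if J.card = k then (∫ x, Real.exp (-lam * x) ∂μ) ^ k
            * (∫ x, Real.exp (lam * x) ∂μ) ^ (n - k) else 0 := by
    intro J
    by_cases hc : J.card = k
    · rw [if_pos hc]
      have hsub : {ℓ : Fin n → ℝ | J.card = k ∧ ∑ j ∈ J, ℓ j ≤ ∑ j ∈ Jᶜ, ℓ j}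
          ⊆ {ℓ : Fin n → ℝ | ∑ j ∈ J, ℓ j ≤ ∑ j ∈ Jᶜ, ℓ j} := fun ℓ hℓ => hℓ.2
      refine le_trans (ENNReal.toReal_mono (measure_ne_top _ _) (measure_mono hsub)) ?_
      have := chernoff_LE μ J lam hlam h1 h2
      rw [hc] at this
      rw [Nat.sub_sub_self hk] at this
      linarith [this]
    · rw [if_neg hc]
      have hempty : {ℓ : Fin n → ℝ | J.card = k ∧ ∑ j ∈ J, ℓ j ≤ ∑ j ∈ Jᶜ, ℓ j} = ∅ := by
        ext ℓ; simp [hc]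
      rw [hempty]
      simp
  refine le_trans (Finset.sum_le_sum fun J _ => hbd J) ?_
  rw [← Finset.sum_filter, Finset.sum_const, card_filter_card_eq, nsmul_eq_mul]
  exact le_of_eq (by ring)

end ExpCounts
/-! ### Integral bounds for the Poincaré polynomial -/

section IntBounds

variable {μ : Measure ℝ} [IsProbabilityMeasure μ] {n : ℕ} {t : ℝ}

lemma lower_gen (hn : 0 < n) (ht : 0 ≤ t) (lam : ℝ) (hlam : 0 ≤ lam)
    (h1 : Integrable (fun x => Real.exp (lam * x)) μ)
    (h2 : Integrable (fun x => Real.exp (-lam * x)) μ)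
    (q : ℕ → ℕ) (hq : ∀ p, p < n - 2 → q p = p ∨ q p = n - 3 - p) :
    (∑ p ∈ Finset.range (n - 2), ((n - 1).choose (q p) : ℝ) * t ^ p)
      - ∑ p ∈ Finset.range (n - 2), ((n.choose (q p + 1) : ℝ)
          * (∫ x, Real.exp (lam * x) ∂μ) ^ (q p + 1)
          * (∫ x, Real.exp (-lam * x) ∂μ) ^ (n - (q p + 1)) * t ^ p)
      ≤ ∫ ℓ, poincareM n t ℓ ∂(pmeas μ n) := by
  have hintlhs : ∀ p : ℕ, Integrable
      (fun ℓ => (((n - 1).choose (q p) : ℝ) - (cntGE n (q p + 1) ℓ : ℝ)) * t ^ p)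
      (pmeas μ n) := fun p => ((integrable_const _).sub (integrable_cntGE _)).mul_const _
  have hpt : ∀ ℓ, ∑ p ∈ Finset.range (n - 2),
      (((n - 1).choose (q p) : ℝ) - (cntGE n (q p + 1) ℓ : ℝ)) * t ^ p
        ≤ poincareM n t ℓ := by
    intro ℓ
    unfold poincareM
    apply Finset.sum_le_sum
    intro p hp
    apply mul_le_mul_of_nonneg_right _ (pow_nonneg ht p)
    have hA := choose_le_aCount_add_cntGE (p := q p) hn ℓ
    have hB : aCount n (q p) ℓ ≤ bPlanar n p ℓ := by
      unfold bPlanar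
      rcases hq p (Finset.mem_range.mp hp) with h | h <;> rw [h] <;> omega
    have hcast : ((n - 1).choose (q p) : ℝ)
        ≤ (aCount n (q p) ℓ : ℝ) + (cntGE n (q p + 1) ℓ : ℝ) := by exact_mod_cast hA
    have hcast2 : (aCount n (q p) ℓ : ℝ) ≤ (bPlanar n p ℓ : ℝ) := by exact_mod_cast hB
    linarith
  have step1 : ∑ p ∈ Finset.range (n - 2),
      (((n - 1).choose (q p) : ℝ) - ∫ ℓ, (cntGE n (q p + 1) ℓ : ℝ) ∂(pmeas μ n)) * t ^ p
      = ∫ ℓ, (∑ p ∈ Finset.range (n - 2),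
          (((n - 1).choose (q p) : ℝ) - (cntGE n (q p + 1) ℓ : ℝ)) * t ^ p) ∂(pmeas μ n) := by
    rw [integral_finset_sum _ fun p _ => hintlhs p]
    refine Finset.sum_congr rfl fun p _ => ?_
    rw [integral_mul_const, integral_sub (integrable_const _) (integrable_cntGE _),
      integral_const]
    simp
  have step0 : (∑ p ∈ Finset.range (n - 2), ((n - 1).choose (q p) : ℝ) * t ^ p)
      - ∑ p ∈ Finset.range (n - 2), ((n.choose (q p + 1) : ℝ)
          * (∫ x, Real.exp (lam * x) ∂μ) ^ (q p + 1)
          * (∫ x, Real.exp (-lam * x) ∂μ) ^ (n - (q p + 1)) * t ^ p)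
      ≤ ∑ p ∈ Finset.range (n - 2),
        (((n - 1).choose (q p) : ℝ) - ∫ ℓ, (cntGE n (q p + 1) ℓ : ℝ) ∂(pmeas μ n)) * t ^ p := by
    rw [← Finset.sum_sub_distrib]
    apply Finset.sum_le_sum
    intro p _
    have hc := integral_cntGE_le (μ := μ) (n := n) (q p + 1) lam hlam h1 h2
    have htp : (0:ℝ) ≤ t ^ p := pow_nonneg ht p
    nlinarith [mul_le_mul_of_nonneg_right hc htp]
  refine le_trans step0 (le_trans (le_of_eq step1) ?_)
  exact integral_mono (integrable_finset_sum _ fun p _ => hintlhs p)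
    (integrable_poincareM t) hpt

lemma upper_gen (ht : 0 ≤ t) (lam : ℝ) (hlam : 0 ≤ lam)
    (h1 : Integrable (fun x => Real.exp (lam * x)) μ)
    (h2 : Integrable (fun x => Real.exp (-lam * x)) μ)
    (q1 q2 : ℕ → ℕ) (hq2n : ∀ p, p < n - 2 → q2 p + 1 ≤ n)
    (hsplit : ∀ p, p < n - 2 → ∀ ℓ, (bPlanar n p ℓ : ℝ)
      ≤ ((n - 1).choose (q1 p) : ℝ) + (cntLE n (q2 p + 1) ℓ : ℝ)) :
    ∫ ℓ, poincareM n t ℓ ∂(pmeas μ n)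
      ≤ (∑ p ∈ Finset.range (n - 2), ((n - 1).choose (q1 p) : ℝ) * t ^ p)
        + ∑ p ∈ Finset.range (n - 2), ((n.choose (q2 p + 1) : ℝ)
            * (∫ x, Real.exp (-lam * x) ∂μ) ^ (q2 p + 1)
            * (∫ x, Real.exp (lam * x) ∂μ) ^ (n - (q2 p + 1)) * t ^ p) := by
  have hintub : ∀ p : ℕ, Integrable
      (fun ℓ => (((n - 1).choose (q1 p) : ℝ) + (cntLE n (q2 p + 1) ℓ : ℝ)) * t ^ p)
      (pmeas μ n) := fun p => ((integrable_const _).add (integrable_cntLE _)).mul_const _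
  have hpt : ∀ ℓ, poincareM n t ℓ ≤ ∑ p ∈ Finset.range (n - 2),
      (((n - 1).choose (q1 p) : ℝ) + (cntLE n (q2 p + 1) ℓ : ℝ)) * t ^ p := by
    intro ℓ
    unfold poincareM
    apply Finset.sum_le_sum
    intro p hp
    exact mul_le_mul_of_nonneg_right (hsplit p (Finset.mem_range.mp hp) ℓ)
      (pow_nonneg ht p)
  have step2 : ∫ ℓ, poincareM n t ℓ ∂(pmeas μ n) ≤ ∑ p ∈ Finset.range (n - 2),
      (((n - 1).choose (q1 p) : ℝ) + ∫ ℓ, (cntLE n (q2 p + 1) ℓ : ℝ) ∂(pmeas μ n)) * t ^ p := by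
    have step1 : ∑ p ∈ Finset.range (n - 2),
        (((n - 1).choose (q1 p) : ℝ) + ∫ ℓ, (cntLE n (q2 p + 1) ℓ : ℝ) ∂(pmeas μ n)) * t ^ p
        = ∫ ℓ, (∑ p ∈ Finset.range (n - 2),
            (((n - 1).choose (q1 p) : ℝ) + (cntLE n (q2 p + 1) ℓ : ℝ)) * t ^ p) ∂(pmeas μ n) := by
      rw [integral_finset_sum _ fun p _ => hintub p]
      refine Finset.sum_congr rfl fun p _ => ?_
      rw [integral_mul_const, integral_add (integrable_const _) (integrable_cntLE _),
        integral_const]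
      simp
    rw [step1]
    exact integral_mono (integrable_poincareM t)
      (integrable_finset_sum _ fun p _ => hintub p) hpt
  refine le_trans step2 ?_
  rw [← Finset.sum_add_distrib]
  apply Finset.sum_le_sum
  intro p hp
  have hc := integral_cntLE_le (μ := μ) (n := n) (q2 p + 1)
    (hq2n p (Finset.mem_range.mp hp)) lam hlam h1 h2
  have htp : (0:ℝ) ≤ t ^ p := pow_nonneg ht p
  nlinarith [mul_le_mul_of_nonneg_right hc htp]

lemma bPlanar_split_fst (hn : 0 < n) (p : ℕ) (ℓ : Fin n → ℝ) :
    (bPlanar n p ℓ : ℝ) ≤ ((n - 1).choose p : ℝ) + (cntLE n ((n - 3 - p) + 1) ℓ : ℝ) := by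
  have h1 := aCount_add_medCount_le (p := p) hn ℓ
  have h2 := aCount_le_cntLE (p := n - 3 - p) ℓ
  have : bPlanar n p ℓ ≤ (n - 1).choose p + cntLE n ((n - 3 - p) + 1) ℓ := by
    unfold bPlanar; omega
  exact_mod_cast this

lemma bPlanar_split_snd (hn : 0 < n) (p : ℕ) (ℓ : Fin n → ℝ) :
    (bPlanar n p ℓ : ℝ) ≤ ((n - 1).choose (n - 3 - p) : ℝ) + (cntLE n (p + 1) ℓ : ℝ) := by
  have h1 := aCount_add_medCount_le_cntLE (p := p) ℓ
  have h2 := aCount_add_medCount_le (p := n - 3 - p) hn ℓ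
  have : bPlanar n p ℓ ≤ (n - 1).choose (n - 3 - p) + cntLE n (p + 1) ℓ := by
    unfold bPlanar
    have h2' : aCount n (n - 3 - p) ℓ ≤ (n - 1).choose (n - 3 - p) := le_trans (Nat.le_add_right _ _) h2
    omega
  exact_mod_cast this

end IntBounds
/-! ### Binomial sum estimates -/

lemma core_sum_le (n : ℕ) {a b : ℝ} (ha : 0 ≤ a) (hb : 0 ≤ b) :
    ∑ p ∈ Finset.range (n - 2), (n.choose (p + 1) : ℝ) * a ^ (p + 1) * b ^ (n - (p + 1))
      ≤ (a + b) ^ n := by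
  have himg : ∑ p ∈ Finset.range (n - 2), (n.choose (p + 1) : ℝ) * a ^ (p + 1) * b ^ (n - (p + 1))
      = ∑ j ∈ (Finset.range (n - 2)).image (· + 1),
          (n.choose j : ℝ) * a ^ j * b ^ (n - j) := by
    rw [Finset.sum_image (by intro x _ y _ h; simp only at h; omega)]
  rw [himg]
  calc ∑ j ∈ (Finset.range (n - 2)).image (· + 1), (n.choose j : ℝ) * a ^ j * b ^ (n - j)
      ≤ ∑ j ∈ Finset.range (n + 1), (n.choose j : ℝ) * a ^ j * b ^ (n - j) := by
        apply Finset.sum_le_sum_of_subset_of_nonneg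
        · intro j hj
          simp only [Finset.mem_image, Finset.mem_range] at hj ⊢
          obtain ⟨p, hp, rfl⟩ := hj
          omega
        · intro j _ _; positivity
    _ = (a + b) ^ n := by
        rw [add_pow]
        exact Finset.sum_congr rfl fun j _ => by ring

lemma err_fst_le (n : ℕ) {t Φ Ψ : ℝ} (ht : 0 < t) (hΦ : 0 ≤ Φ) (hΨ : 0 ≤ Ψ) :
    ∑ p ∈ Finset.range (n - 2),
        (n.choose (p + 1) : ℝ) * Φ ^ (p + 1) * Ψ ^ (n - (p + 1)) * t ^ p
      ≤ (t * Φ + Ψ) ^ n / t := by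
  rw [le_div_iff₀ ht, Finset.sum_mul]
  have : ∀ p ∈ Finset.range (n - 2),
      (n.choose (p + 1) : ℝ) * Φ ^ (p + 1) * Ψ ^ (n - (p + 1)) * t ^ p * t
        = (n.choose (p + 1) : ℝ) * (t * Φ) ^ (p + 1) * Ψ ^ (n - (p + 1)) := by
    intro p _
    rw [mul_pow]
    ring
  rw [Finset.sum_congr rfl this]
  exact core_sum_le n (by positivity) hΨ

lemma err_snd_le {n : ℕ} (hn : 3 ≤ n) {t X Y : ℝ} (ht : 0 < t) (hX : 0 ≤ X) (hY : 0 ≤ Y) :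
    ∑ p ∈ Finset.range (n - 2),
        (n.choose ((n - 3 - p) + 1) : ℝ) * X ^ ((n - 3 - p) + 1)
          * Y ^ (n - ((n - 3 - p) + 1)) * t ^ p
      ≤ t ^ (n - 2) * (X / t + Y) ^ n := by
  have hrefl : ∑ p ∈ Finset.range (n - 2),
      (n.choose ((n - 3 - p) + 1) : ℝ) * X ^ ((n - 3 - p) + 1)
        * Y ^ (n - ((n - 3 - p) + 1)) * t ^ p
      = ∑ q ∈ Finset.range (n - 2),
        (n.choose (q + 1) : ℝ) * X ^ (q + 1) * Y ^ (n - (q + 1)) * t ^ (n - 3 - q) := by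
    rw [← Finset.sum_range_reflect]
    refine Finset.sum_congr rfl fun p hp => ?_
    rw [Finset.mem_range] at hp
    have h1 : n - 2 - 1 - p = n - 3 - p := by omega
    have h2 : n - 3 - (n - 3 - p) = p := by omega
    rw [h1, h2]
  rw [hrefl]
  have hterm : ∀ q ∈ Finset.range (n - 2),
      (n.choose (q + 1) : ℝ) * X ^ (q + 1) * Y ^ (n - (q + 1)) * t ^ (n - 3 - q)
        = t ^ (n - 2) * ((n.choose (q + 1) : ℝ) * (X / t) ^ (q + 1) * Y ^ (n - (q + 1))) := by
    intro q hq
    rw [Finset.mem_range] at hq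
    have hsplit : t ^ (n - 2) = t ^ (n - 3 - q) * t ^ (q + 1) := by
      rw [← pow_add]; congr 1; omega
    rw [div_pow, hsplit]
    field_simp
  rw [Finset.sum_congr rfl hterm, ← Finset.mul_sum]
  exact mul_le_mul_of_nonneg_left (core_sum_le n (by positivity) hY) (by positivity)

lemma sumA_closed (m : ℕ) (t : ℝ) :
    ∑ p ∈ Finset.range m, ((m + 1).choose p : ℝ) * t ^ p
      = (1 + t) ^ (m + 1) - (m + 1) * t ^ m - t ^ (m + 1) := by
  have h := add_pow t 1 (m + 1)
  rw [Finset.sum_range_succ, Finset.sum_range_succ] at h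
  simp only [one_pow, mul_one, Nat.choose_self, Nat.choose_succ_self_right, Nat.cast_one] at h
  have h2 : (t + 1) ^ (m + 1) = (1 + t) ^ (m + 1) := by ring_nf
  rw [h2] at h
  have h3 : ∑ p ∈ Finset.range m, ((m + 1).choose p : ℝ) * t ^ p
      = ∑ x ∈ Finset.range m, t ^ x * ((m + 1).choose x : ℝ) :=
    Finset.sum_congr rfl fun x _ => by ring
  rw [h3]
  push_cast at h ⊢
  linarith [h]

lemma sumB_closed (m : ℕ) {t : ℝ} (ht : t ≠ 0) :
    ∑ p ∈ Finset.range m, ((m + 1).choose (m - 1 - p) : ℝ) * t ^ p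
      = ((1 + t) ^ (m + 1) - (m + 1) * t - 1) / t ^ 2 := by
  rcases Nat.eq_zero_or_pos m with hm | hm
  · subst hm
    rw [Finset.range_zero, Finset.sum_empty]
    rw [eq_comm, div_eq_zero_iff]
    left; push_cast; ring
  have hrefl : ∑ p ∈ Finset.range m, ((m + 1).choose (m - 1 - p) : ℝ) * t ^ p
      = ∑ q ∈ Finset.range m, ((m + 1).choose q : ℝ) * t ^ (m - 1 - q) := by
    rw [← Finset.sum_range_reflect]
    refine Finset.sum_congr rfl fun p hp => ?_
    rw [Finset.mem_range] at hp
    have h2 : m - 1 - (m - 1 - p) = p := by omega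
    rw [h2]
  rw [hrefl, eq_div_iff (by positivity : (t:ℝ) ^ 2 ≠ 0), Finset.sum_mul]
  have hterm : ∀ q ∈ Finset.range m,
      ((m + 1).choose q : ℝ) * t ^ (m - 1 - q) * t ^ 2
        = t ^ (m + 1 - q) * ((m + 1).choose q : ℝ) := by
    intro q hq
    rw [Finset.mem_range] at hq
    have h3 : m + 1 - q = (m - 1 - q) + 2 := by omega
    rw [h3, pow_add]
    ring
  rw [Finset.sum_congr rfl hterm]
  have h := add_pow 1 t (m + 1)
  rw [Finset.sum_range_succ, Finset.sum_range_succ] at h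
  have e1 : m + 1 - m = 1 := by omega
  have e2 : m + 1 - (m + 1) = 0 := by omega
  rw [e1, e2] at h
  simp only [one_pow, one_mul, pow_one, pow_zero, mul_one, Nat.choose_self,
    Nat.choose_succ_self_right, Nat.cast_one, Nat.cast_add] at h
  push_cast at h ⊢
  linarith [h]

lemma sum_choose_le (m : ℕ) {t : ℝ} (ht : 0 ≤ t) :
    ∑ p ∈ Finset.range m, ((m + 1).choose p : ℝ) * t ^ p ≤ (1 + t) ^ (m + 1) := by
  have h := sumA_closed m t
  nlinarith [pow_nonneg ht m, pow_nonneg ht (m + 1), h,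
    mul_nonneg (by positivity : (0:ℝ) ≤ (m:ℝ) + 1) (pow_nonneg ht m)]
/-! ### Limit helpers -/

lemma tendsto_cast_sub_one_mul_pow {r : ℝ} (h0 : 0 ≤ r) (h1 : r < 1) (c : ℕ) :
    Tendsto (fun n : ℕ => ((n : ℝ) - 1) * r ^ (n - c)) atTop (nhds 0) := by
  have hn : ‖r‖ < 1 := by rwa [Real.norm_eq_abs, abs_of_nonneg h0]
  have h2 : Tendsto (fun k : ℕ => (k : ℝ) ^ 1 * r ^ k) atTop (nhds 0) :=
    (summable_pow_mul_geometric_of_norm_lt_one 1 hn).tendsto_atTop_zero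
  have h3 : Tendsto (fun k : ℕ => r ^ k) atTop (nhds 0) :=
    tendsto_pow_atTop_nhds_zero_of_lt_one h0 h1
  have base : Tendsto (fun k : ℕ => ((k : ℝ) + ((c : ℝ) - 1)) * r ^ k) atTop (nhds 0) := by
    have h4 := h2.add (h3.const_mul ((c : ℝ) - 1))
    rw [mul_zero, add_zero] at h4
    refine h4.congr fun k => ?_
    ring
  have hcomp := base.comp (tendsto_sub_atTop_nat c)
  refine Tendsto.congr' ?_ hcomp
  filter_upwards [eventually_ge_atTop c] with n hnc
  simp only [Function.comp_apply]
  congr 1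
  rw [Nat.cast_sub hnc]
  ring

lemma tendsto_tail1 {t : ℝ} (ht : 0 < t) :
    Tendsto (fun n : ℕ => (((n : ℝ) - 1) * t ^ (n - 2) + t ^ (n - 1)) / (1 + t) ^ (n - 1))
      atTop (nhds 0) := by
  have hD : (0 : ℝ) < 1 + t := by linarith
  have hr0 : 0 ≤ t / (1 + t) := by positivity
  have hr1 : t / (1 + t) < 1 := by rw [div_lt_one hD]; linarith
  have h1 := (tendsto_cast_sub_one_mul_pow hr0 hr1 2).mul_const (1 / (1 + t))
  have h2 := (tendsto_pow_atTop_nhds_zero_of_lt_one hr0 hr1).comp (tendsto_sub_atTop_nat 1)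
  have h4 := h1.add h2
  rw [zero_mul, add_zero] at h4
  refine Tendsto.congr' ?_ h4
  filter_upwards [eventually_ge_atTop 2] with n hn2
  simp only [Function.comp_apply]
  have e : (1 + t) ^ (n - 1) = (1 + t) ^ (n - 2) * (1 + t) := by
    rw [← pow_succ]; congr 1; omega
  rw [div_pow, div_pow, e]
  have hne1 : ((1 + t) ^ (n - 2) : ℝ) ≠ 0 := by positivity
  have hne2 : (1 + t : ℝ) ≠ 0 := by positivity
  field_simp

lemma tendsto_tail2 {t : ℝ} (ht : 0 < t) :
    Tendsto (fun n : ℕ => (((n : ℝ) - 1) * t + 1) / (1 + t) ^ (n - 1)) atTop (nhds 0) := by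
  have hD : (0 : ℝ) < 1 + t := by linarith
  have hr0 : 0 ≤ 1 / (1 + t) := by positivity
  have hr1 : 1 / (1 + t) < 1 := by rw [div_lt_one hD]; linarith
  have h1 := (tendsto_cast_sub_one_mul_pow hr0 hr1 1).const_mul t
  have h2 := (tendsto_pow_atTop_nhds_zero_of_lt_one hr0 hr1).comp (tendsto_sub_atTop_nat 1)
  have h4 := h1.add h2
  rw [mul_zero, add_zero] at h4
  refine Tendsto.congr' ?_ h4
  filter_upwards [eventually_ge_atTop 1] with n hn1
  simp only [Function.comp_apply]
  rw [div_pow, one_pow]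
  have hne1 : ((1 + t) ^ (n - 1) : ℝ) ≠ 0 := by positivity
  field_simp
/-- For every `t > 0`, `t ≠ 1`,
`μ_n[p_{M_ℓ}(t)] / (1+t)^{n-1} → min(1, t⁻²)`. -/
theorem stmt7 (μ : MeasureTheory.Measure ℝ) [IsProbabilityMeasure μ] [NullSingletonClass μ]
    (hsupp : μ (Set.Ioi (0 : ℝ))ᶜ = 0)
    (hexp : ∃ η > 0, Integrable (fun x => Real.exp (η * x)) μ)
    (t : ℝ) (ht : 0 < t) (ht1 : t ≠ 1) :
    Tendsto (fun n => (∫ ℓ, poincareM n t ℓ ∂(pmeas μ n)) / (1 + t) ^ (n - 1))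
      atTop (nhds (min 1 (1 / t ^ 2))) := by
  have hD : (0 : ℝ) < 1 + t := by linarith
  have hDne : (1 + t : ℝ) ≠ 0 := ne_of_gt hD
  have htne : t ≠ 0 := ne_of_gt ht
  rcases lt_or_gt_of_ne ht1 with htlt | htgt
  · -- case t < 1 : limit is 1
    obtain ⟨lam, hlam0, hint1, hint2, hkey⟩ := exists_good_lam hsupp hexp ht htlt
    have hΦ0 : 0 ≤ ∫ x, Real.exp (lam * x) ∂μ := integral_nonneg fun x => (Real.exp_pos _).le
    have hΨ0 : 0 ≤ ∫ x, Real.exp (-lam * x) ∂μ := integral_nonneg fun x => (Real.exp_pos _).le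
    set Φ := ∫ x, Real.exp (lam * x) ∂μ with hΦdef
    set Ψ := ∫ x, Real.exp (-lam * x) ∂μ with hΨdef
    have hmin : min 1 (1 / t ^ 2) = 1 := by
      apply min_eq_left
      rw [le_div_iff₀ (by positivity : (0:ℝ) < t ^ 2)]
      nlinarith
    rw [hmin]
    set B : ℝ := (t * Φ + Ψ) / (1 + t) with hBdef
    have hB0 : 0 ≤ B := div_nonneg (by positivity) hD.le
    have hB1 : B < 1 := (div_lt_one hD).mpr hkey
    have hBn : Tendsto (fun n : ℕ => B ^ n) atTop (nhds 0) :=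
      tendsto_pow_atTop_nhds_zero_of_lt_one hB0 hB1
    set lo : ℕ → ℝ := fun n =>
      1 - (((n : ℝ) - 1) * t ^ (n - 2) + t ^ (n - 1)) / (1 + t) ^ (n - 1)
        - ((1 + t) / t) * B ^ n with hlodef
    set hi : ℕ → ℝ := fun n => 1 + ((1 + t) / t ^ 2) * B ^ n with hhidef
    have hlo_t : Tendsto lo atTop (nhds 1) := by
      have h := ((tendsto_const_nhds (x := (1:ℝ)) (f := atTop)).sub
        (tendsto_tail1 ht)).sub (hBn.const_mul ((1 + t) / t))
      rw [mul_zero, sub_zero, sub_zero] at h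
      exact h
    have hhi_t : Tendsto hi atTop (nhds 1) := by
      have h := (tendsto_const_nhds (x := (1:ℝ)) (f := atTop)).add
        (hBn.const_mul ((1 + t) / t ^ 2))
      rw [mul_zero, add_zero] at h
      exact h
    refine tendsto_of_tendsto_of_tendsto_of_le_of_le' hlo_t hhi_t ?_ ?_
    · -- lower bound
      filter_upwards [eventually_ge_atTop 3] with n hn3
      have hpowpos : (0:ℝ) < (1 + t) ^ (n - 1) := pow_pos hD _
      have e21 : n - 2 + 1 = n - 1 := by omega
      have hS : ∑ p ∈ Finset.range (n - 2), ((n - 1).choose p : ℝ) * t ^ p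
          = (1 + t) ^ (n - 1) - ((n : ℝ) - 1) * t ^ (n - 2) - t ^ (n - 1) := by
        have h := sumA_closed (n - 2) t
        rw [e21] at h
        have ec : ((n - 2 : ℕ) : ℝ) + 1 = (n : ℝ) - 1 := by
          rw [Nat.cast_sub (by omega : 2 ≤ n)]; ring
        rw [ec] at h
        exact h
      have hlower : (∑ p ∈ Finset.range (n - 2), ((n - 1).choose p : ℝ) * t ^ p)
          - ∑ p ∈ Finset.range (n - 2), ((n.choose (p + 1) : ℝ)
              * Φ ^ (p + 1) * Ψ ^ (n - (p + 1)) * t ^ p)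
          ≤ ∫ ℓ, poincareM n t ℓ ∂(pmeas μ n) :=
        lower_gen (by omega : 0 < n) ht.le lam hlam0.le hint1 hint2
          (fun p => p) (fun p _ => Or.inl rfl)
      have herr : ∑ p ∈ Finset.range (n - 2), ((n.choose (p + 1) : ℝ)
          * Φ ^ (p + 1) * Ψ ^ (n - (p + 1)) * t ^ p) ≤ (t * Φ + Ψ) ^ n / t :=
        err_fst_le n ht hΦ0 hΨ0
      have hIlow : (1 + t) ^ (n - 1) - ((n : ℝ) - 1) * t ^ (n - 2) - t ^ (n - 1)
          - (t * Φ + Ψ) ^ n / t ≤ ∫ ℓ, poincareM n t ℓ ∂(pmeas μ n) := by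
        linarith [hlower, herr, hS.ge, hS.le]
      rw [le_div_iff₀ hpowpos]
      have hBn_eq : ((1 + t) / t) * B ^ n * (1 + t) ^ (n - 1) = (t * Φ + Ψ) ^ n / t := by
        rw [hBdef, div_pow]
        have e : (1 + t) ^ n = (1 + t) ^ (n - 1) * (1 + t) := by
          rw [← pow_succ]; congr 1; omega
        rw [e]
        field_simp
      have hcalc : lo n * (1 + t) ^ (n - 1)
          = (1 + t) ^ (n - 1) - (((n : ℝ) - 1) * t ^ (n - 2) + t ^ (n - 1))
            - (t * Φ + Ψ) ^ n / t := by
        rw [hlodef]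
        simp only []
        rw [sub_mul, sub_mul, one_mul, div_mul_cancel₀ _ (ne_of_gt hpowpos), hBn_eq]
      rw [hcalc]
      linarith [hIlow]
    · -- upper bound
      filter_upwards [eventually_ge_atTop 3] with n hn3
      have hpowpos : (0:ℝ) < (1 + t) ^ (n - 1) := pow_pos hD _
      have e21 : n - 2 + 1 = n - 1 := by omega
      have hupper : ∫ ℓ, poincareM n t ℓ ∂(pmeas μ n)
          ≤ (∑ p ∈ Finset.range (n - 2), ((n - 1).choose p : ℝ) * t ^ p)
            + ∑ p ∈ Finset.range (n - 2), ((n.choose ((n - 3 - p) + 1) : ℝ)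
                * Ψ ^ ((n - 3 - p) + 1) * Φ ^ (n - ((n - 3 - p) + 1)) * t ^ p) :=
        upper_gen ht.le lam hlam0.le hint1 hint2 (fun p => p) (fun p => n - 3 - p)
          (fun p hp => by show n - 3 - p + 1 ≤ n; omega)
          (fun p hp ℓ => bPlanar_split_fst (by omega : 0 < n) p ℓ)
      have hsum1 : ∑ p ∈ Finset.range (n - 2), ((n - 1).choose p : ℝ) * t ^ p
          ≤ (1 + t) ^ (n - 1) := by
        have h := sum_choose_le (n - 2) ht.le
        rwa [e21] at h
      have herr : ∑ p ∈ Finset.range (n - 2), ((n.choose ((n - 3 - p) + 1) : ℝ)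
          * Ψ ^ ((n - 3 - p) + 1) * Φ ^ (n - ((n - 3 - p) + 1)) * t ^ p)
          ≤ t ^ (n - 2) * (Ψ / t + Φ) ^ n :=
        err_snd_le hn3 ht hΨ0 hΦ0
      rw [div_le_iff₀ hpowpos]
      have hEq : ((1 + t) / t ^ 2) * B ^ n * (1 + t) ^ (n - 1)
          = t ^ (n - 2) * (Ψ / t + Φ) ^ n := by
        rw [hBdef]
        have hq : Ψ / t + Φ = (t * Φ + Ψ) / t := by field_simp; ring
        have e : (1 + t) ^ n = (1 + t) ^ (n - 1) * (1 + t) := by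
          rw [← pow_succ]; congr 1; omega
        have et : t ^ n = t ^ (n - 2) * t ^ 2 := by rw [← pow_add]; congr 1; omega
        rw [hq, div_pow, div_pow, e, et]
        field_simp
      have hcalc : hi n * (1 + t) ^ (n - 1)
          = (1 + t) ^ (n - 1) + t ^ (n - 2) * (Ψ / t + Φ) ^ n := by
        rw [hhidef]
        simp only []
        rw [add_mul, one_mul, hEq]
      rw [hcalc]
      linarith [hupper, hsum1, herr]
  · -- case t > 1 : limit is 1/t²
    have hti : (0:ℝ) < t⁻¹ := by positivity
    have hti1 : t⁻¹ < 1 := by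
      rw [inv_lt_one_iff₀]; right; exact htgt
    obtain ⟨lam, hlam0, hint1, hint2, hkey0⟩ := exists_good_lam hsupp hexp hti hti1
    have hΦ0 : 0 ≤ ∫ x, Real.exp (lam * x) ∂μ := integral_nonneg fun x => (Real.exp_pos _).le
    have hΨ0 : 0 ≤ ∫ x, Real.exp (-lam * x) ∂μ := integral_nonneg fun x => (Real.exp_pos _).le
    set Φ := ∫ x, Real.exp (lam * x) ∂μ with hΦdef
    set Ψ := ∫ x, Real.exp (-lam * x) ∂μ with hΨdef
    have hkey : t * Ψ + Φ < 1 + t := by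
      have hmul := mul_lt_mul_of_pos_left hkey0 ht
      rw [mul_add, mul_add, ← mul_assoc, mul_inv_cancel₀ htne, one_mul, mul_one] at hmul
      linarith
    have hmin : min 1 (1 / t ^ 2) = 1 / t ^ 2 := by
      apply min_eq_right
      rw [div_le_one (by positivity : (0:ℝ) < t ^ 2)]
      nlinarith
    rw [hmin]
    set B : ℝ := (t * Ψ + Φ) / (1 + t) with hBdef
    have hB0 : 0 ≤ B := div_nonneg (by positivity) hD.le
    have hB1 : B < 1 := (div_lt_one hD).mpr hkey
    have hBn : Tendsto (fun n : ℕ => B ^ n) atTop (nhds 0) :=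
      tendsto_pow_atTop_nhds_zero_of_lt_one hB0 hB1
    set lo : ℕ → ℝ := fun n =>
      (1 - (((n : ℝ) - 1) * t + 1) / (1 + t) ^ (n - 1)) / t ^ 2
        - ((1 + t) / t ^ 2) * B ^ n with hlodef
    set hi : ℕ → ℝ := fun n => 1 / t ^ 2 + ((1 + t) / t) * B ^ n with hhidef
    have hlo_t : Tendsto lo atTop (nhds (1 / t ^ 2)) := by
      have h := (((tendsto_const_nhds (x := (1:ℝ)) (f := atTop)).sub
        (tendsto_tail2 ht)).div_const (t ^ 2)).sub (hBn.const_mul ((1 + t) / t ^ 2))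
      rw [show ((1:ℝ) - 0) / t ^ 2 - (1 + t) / t ^ 2 * 0 = 1 / t ^ 2 by ring] at h
      exact h
    have hhi_t : Tendsto hi atTop (nhds (1 / t ^ 2)) := by
      have h := (tendsto_const_nhds (x := (1 / t ^ 2 : ℝ)) (f := atTop)).add
        (hBn.const_mul ((1 + t) / t))
      rw [mul_zero, add_zero] at h
      exact h
    refine tendsto_of_tendsto_of_tendsto_of_le_of_le' hlo_t hhi_t ?_ ?_
    · -- lower bound
      filter_upwards [eventually_ge_atTop 3] with n hn3
      have hpowpos : (0:ℝ) < (1 + t) ^ (n - 1) := pow_pos hD _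
      have e21 : n - 2 + 1 = n - 1 := by omega
      have hS2 : ∑ p ∈ Finset.range (n - 2), ((n - 1).choose (n - 3 - p) : ℝ) * t ^ p
          = ((1 + t) ^ (n - 1) - ((n : ℝ) - 1) * t - 1) / t ^ 2 := by
        have h := sumB_closed (n - 2) htne
        rw [e21, show n - 2 - 1 = n - 3 from by omega] at h
        have ec : ((n - 2 : ℕ) : ℝ) + 1 = (n : ℝ) - 1 := by
          rw [Nat.cast_sub (by omega : 2 ≤ n)]; ring
        rw [ec] at h
        exact h
      have hlower : (∑ p ∈ Finset.range (n - 2), ((n - 1).choose (n - 3 - p) : ℝ) * t ^ p)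
          - ∑ p ∈ Finset.range (n - 2), ((n.choose ((n - 3 - p) + 1) : ℝ)
              * Φ ^ ((n - 3 - p) + 1) * Ψ ^ (n - ((n - 3 - p) + 1)) * t ^ p)
          ≤ ∫ ℓ, poincareM n t ℓ ∂(pmeas μ n) :=
        lower_gen (by omega : 0 < n) ht.le lam hlam0.le hint1 hint2
          (fun p => n - 3 - p) (fun p _ => Or.inr rfl)
      have herr : ∑ p ∈ Finset.range (n - 2), ((n.choose ((n - 3 - p) + 1) : ℝ)
          * Φ ^ ((n - 3 - p) + 1) * Ψ ^ (n - ((n - 3 - p) + 1)) * t ^ p)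
          ≤ t ^ (n - 2) * (Φ / t + Ψ) ^ n :=
        err_snd_le hn3 ht hΦ0 hΨ0
      rw [le_div_iff₀ hpowpos]
      have hEq : ((1 + t) / t ^ 2) * B ^ n * (1 + t) ^ (n - 1)
          = t ^ (n - 2) * (Φ / t + Ψ) ^ n := by
        rw [hBdef]
        have hq : Φ / t + Ψ = (t * Ψ + Φ) / t := by field_simp; ring
        have e : (1 + t) ^ n = (1 + t) ^ (n - 1) * (1 + t) := by
          rw [← pow_succ]; congr 1; omega
        have et : t ^ n = t ^ (n - 2) * t ^ 2 := by rw [← pow_add]; congr 1; omega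
        rw [hq, div_pow, div_pow, e, et]
        field_simp
      have hcalc : lo n * (1 + t) ^ (n - 1)
          = ((1 + t) ^ (n - 1) - ((n : ℝ) - 1) * t - 1) / t ^ 2
            - t ^ (n - 2) * (Φ / t + Ψ) ^ n := by
        rw [hlodef]
        simp only []
        rw [sub_mul, hEq]
        congr 1
        field_simp
        ring
      rw [hcalc]
      linarith [hlower, herr, hS2.ge, hS2.le]
    · -- upper bound
      filter_upwards [eventually_ge_atTop 3] with n hn3
      have hpowpos : (0:ℝ) < (1 + t) ^ (n - 1) := pow_pos hD _
      have e21 : n - 2 + 1 = n - 1 := by omega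
      have hS2 : ∑ p ∈ Finset.range (n - 2), ((n - 1).choose (n - 3 - p) : ℝ) * t ^ p
          = ((1 + t) ^ (n - 1) - ((n : ℝ) - 1) * t - 1) / t ^ 2 := by
        have h := sumB_closed (n - 2) htne
        rw [e21, show n - 2 - 1 = n - 3 from by omega] at h
        have ec : ((n - 2 : ℕ) : ℝ) + 1 = (n : ℝ) - 1 := by
          rw [Nat.cast_sub (by omega : 2 ≤ n)]; ring
        rw [ec] at h
        exact h
      have hupper : ∫ ℓ, poincareM n t ℓ ∂(pmeas μ n)
          ≤ (∑ p ∈ Finset.range (n - 2), ((n - 1).choose (n - 3 - p) : ℝ) * t ^ p)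
            + ∑ p ∈ Finset.range (n - 2), ((n.choose (p + 1) : ℝ)
                * Ψ ^ (p + 1) * Φ ^ (n - (p + 1)) * t ^ p) :=
        upper_gen ht.le lam hlam0.le hint1 hint2 (fun p => n - 3 - p) (fun p => p)
          (fun p hp => by show p + 1 ≤ n; omega)
          (fun p hp ℓ => bPlanar_split_snd (by omega : 0 < n) p ℓ)
      have hsum2 : ∑ p ∈ Finset.range (n - 2), ((n - 1).choose (n - 3 - p) : ℝ) * t ^ p
          ≤ (1 + t) ^ (n - 1) / t ^ 2 := by
        rw [hS2]
        have hn1 : (1:ℝ) ≤ (n : ℝ) := by exact_mod_cast (by omega : 1 ≤ n)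
        gcongr
        nlinarith
      have herr : ∑ p ∈ Finset.range (n - 2), ((n.choose (p + 1) : ℝ)
          * Ψ ^ (p + 1) * Φ ^ (n - (p + 1)) * t ^ p) ≤ (t * Ψ + Φ) ^ n / t :=
        err_fst_le n ht hΨ0 hΦ0
      rw [div_le_iff₀ hpowpos]
      have hEq2 : ((1 + t) / t) * B ^ n * (1 + t) ^ (n - 1) = (t * Ψ + Φ) ^ n / t := by
        rw [hBdef, div_pow]
        have e : (1 + t) ^ n = (1 + t) ^ (n - 1) * (1 + t) := by
          rw [← pow_succ]; congr 1; omega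
        rw [e]
        field_simp
      have hcalc : hi n * (1 + t) ^ (n - 1)
          = (1 + t) ^ (n - 1) / t ^ 2 + (t * Ψ + Φ) ^ n / t := by
        rw [hhidef]
        simp only []
        rw [add_mul, hEq2, div_mul_eq_mul_div, one_mul]
      rw [hcalc]
      linarith [hupper, hsum2, herr]
end
end

section
/- For every n ≥ 1, every ℓ ∈ (0,∞)^n, and every 0 ≤ p ≤ n−1, the number of short subsets satisfies p! (n−1−p)! · a_p(ℓ) = #{ σ ∈ Σ_{n−1} : τ_σ(ℓ̃) > p }, where Σ_{n−1} is the group of permutations of {1,…,n−1}; equivalently, a_p(ℓ) = C(n−1,p) · (the proportion of permutations σ ∈ Σ_{n−1} with τ_σ(ℓ̃) > p). -/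
open MeasureTheory Filter Finset

noncomputable section

namespace Stmt15Aux

variable {n : ℕ}

def emb (n : ℕ) : Fin (n - 1) → Fin n :=
  fun i => ⟨i.1, lt_of_lt_of_le i.2 (Nat.sub_le n 1)⟩

lemma emb_inj : Function.Injective (emb n) := fun _ _ h => Fin.ext (congrArg Fin.val h : _)

def lastI (hn : 1 ≤ n) : Fin n := ⟨n - 1, by omega⟩

lemma emb_ne_last (hn : 1 ≤ n) (i : Fin (n - 1)) : emb n i ≠ lastI hn := by
  intro h
  have h2 := i.2
  have := congrArg Fin.val h
  simp [emb, lastI] at this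
  omega

lemma eq_last_or_emb (hn : 1 ≤ n) (j : Fin n) : j = lastI hn ∨ ∃ i, emb n i = j := by
  by_cases h : (j : ℕ) = n - 1
  · exact Or.inl (Fin.ext h)
  · have h2 := j.2
    exact Or.inr ⟨⟨j.1, by omega⟩, rfl⟩

def Jset (hn : 1 ≤ n) (T : Finset (Fin (n - 1))) : Finset (Fin n) :=
  insert (lastI hn) (T.image (emb n))

lemma card_Jset (hn : 1 ≤ n) (T : Finset (Fin (n - 1))) :
    (Jset hn T).card = T.card + 1 := by
  rw [Jset, card_insert_of_notMem, card_image_of_injective _ emb_inj]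
  simp only [mem_image]
  rintro ⟨i, _, hi⟩
  exact emb_ne_last hn i hi

lemma compl_Jset (hn : 1 ≤ n) (T : Finset (Fin (n - 1))) :
    (Jset hn T)ᶜ = Tᶜ.image (emb n) := by
  ext j
  simp only [mem_compl, Jset, mem_insert, mem_image, not_or, not_exists, not_and]
  constructor
  · rintro ⟨hj1, hj2⟩
    rcases eq_last_or_emb hn j with h | ⟨i, rfl⟩
    · exact absurd h hj1
    · exact ⟨i, fun hi => hj2 i hi rfl, rfl⟩
  · rintro ⟨i, hi, rfl⟩
    refine ⟨emb_ne_last hn i, fun i' hi' h => ?_⟩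
    exact hi (emb_inj h ▸ hi')

lemma sum_Jset (hn : 1 ≤ n) (m : Fin n → ℝ) (T : Finset (Fin (n - 1))) :
    ∑ j ∈ Jset hn T, m j = m (lastI hn) + ∑ i ∈ T, m (emb n i) := by
  rw [Jset, sum_insert, sum_image (fun a _ b _ h => emb_inj h)]
  simp only [mem_image]
  rintro ⟨i, _, hi⟩
  exact emb_ne_last hn i hi

lemma sum_compl_Jset (hn : 1 ≤ n) (m : Fin n → ℝ) (T : Finset (Fin (n - 1))) :
    ∑ j ∈ (Jset hn T)ᶜ, m j = ∑ i ∈ Tᶜ, m (emb n i) := by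
  rw [compl_Jset, sum_image (fun a _ b _ h => emb_inj h)]

/-- `T ∪ {last}` is short for `m`. -/
def ShortT (hn : 1 ≤ n) (m : Fin n → ℝ) (T : Finset (Fin (n - 1))) : Prop :=
  ∑ j ∈ Jset hn T, m j < ∑ j ∈ (Jset hn T)ᶜ, m j

lemma short_mono {J K : Finset (Fin n)} (m : Fin n → ℝ) (hm : ∀ i, 0 ≤ m i) (hJK : J ⊆ K)
    (h : ∑ j ∈ K, m j < ∑ j ∈ Kᶜ, m j) : ∑ j ∈ J, m j < ∑ j ∈ Jᶜ, m j :=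
  lt_of_le_of_lt (sum_le_sum_of_subset_of_nonneg hJK fun i _ _ => hm i)
    (lt_of_lt_of_le h (sum_le_sum_of_subset_of_nonneg
      (compl_subset_compl.mpr hJK) fun i _ _ => hm i))

def Aset (n p : ℕ) : Finset (Fin (n - 1)) := univ.filter (fun i => (i : ℕ) < p)

lemma card_Aset {p : ℕ} (hp : p ≤ n - 1) : (Aset n p).card = p := by
  have h : Aset n p = (univ : Finset (Fin p)).image (Fin.castLE hp) := by
    ext i
    simp only [Aset, mem_filter, mem_univ, true_and, mem_image]
    constructor
    · intro h; exact ⟨⟨i.1, h⟩, rfl⟩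
    · rintro ⟨k, rfl⟩; exact k.2
  rw [h, card_image_of_injective _ (Fin.castLE_injective hp), card_univ, Fintype.card_fin]

lemma image_compl_perm {α : Type*} [Fintype α] [DecidableEq α]
    (σ : Equiv.Perm α) (s : Finset α) :
    (s.image σ)ᶜ = sᶜ.image σ := by
  have key : ∀ (u : Finset α) (j), j ∈ u.image σ ↔ σ.symm j ∈ u := by
    intro u j
    simp only [mem_image]
    constructor
    · rintro ⟨i, hi, rfl⟩; simpa using hi
    · intro h; exact ⟨σ.symm j, h, by simp⟩
  ext j
  simp [key, mem_compl]

end Stmt15Aux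

namespace Stmt15Aux

lemma coord_emb (hn : 1 ≤ n) (m : Fin n → ℝ) (i : Fin (n - 1)) :
    coord n m (i : ℕ) = m (emb n i) := by
  have h1 : (i : ℕ) < n := lt_of_lt_of_le i.2 (Nat.sub_le n 1)
  rw [coord, dif_pos h1]
  rfl

lemma coord_last (hn : 1 ≤ n) (m : Fin n → ℝ) :
    coord n m (n - 1) = m (lastI hn) := by
  have h1 : n - 1 < n := by omega
  rw [coord, dif_pos h1]
  rfl

lemma cond_iff (hn : 1 ≤ n) (m : Fin n → ℝ) (σ : Equiv.Perm (Fin (n - 1))) (t : ℕ) :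
    (0 ≤ coord n m (n - 1) + ∑ i : Fin (n - 1),
      (if (i : ℕ) < t then coord n m ((σ i : ℕ)) else - coord n m ((σ i : ℕ)))) ↔
    ∑ j ∈ (Jset hn ((Aset n t).image σ))ᶜ, m j ≤ ∑ j ∈ Jset hn ((Aset n t).image σ), m j := by
  have hc : ∀ i : Fin (n - 1), coord n m ((σ i : ℕ)) = m (emb n (σ i)) :=
    fun i => coord_emb hn m (σ i)
  have hsplit : ∑ i : Fin (n - 1),
      (if (i : ℕ) < t then coord n m ((σ i : ℕ)) else - coord n m ((σ i : ℕ)))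
      = ∑ i ∈ Aset n t, m (emb n (σ i)) - ∑ i ∈ (Aset n t)ᶜ, m (emb n (σ i)) := by
    rw [Finset.sum_ite, sub_eq_add_neg, ← Finset.sum_neg_distrib]
    congr 1
    · exact Finset.sum_congr rfl (fun i _ => hc i)
    · rw [show (Aset n t)ᶜ = univ.filter (fun i : Fin (n-1) => ¬ (i : ℕ) < t) from ?_]
      · exact Finset.sum_congr rfl (fun i _ => by rw [hc i])
      · ext i; simp [Aset]
  have him1 : ∑ i ∈ Aset n t, m (emb n (σ i)) = ∑ j ∈ (Aset n t).image σ, m (emb n j) :=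
    (Finset.sum_image (f := fun j => m (emb n j)) (fun a _ b _ h => σ.injective h)).symm
  have him2 : ∑ i ∈ (Aset n t)ᶜ, m (emb n (σ i)) = ∑ j ∈ ((Aset n t).image σ)ᶜ, m (emb n j) := by
    rw [image_compl_perm]
    exact (Finset.sum_image (f := fun j => m (emb n j)) (fun a _ b _ h => σ.injective h)).symm
  rw [coord_last hn, hsplit, him1, him2, sum_Jset, sum_compl_Jset]
  constructor <;> intro h <;> linarith

lemma tau_gt_iff (hn : 1 ≤ n) (m : Fin n → ℝ) (hm : ∀ i, 0 < m i)
    (σ : Equiv.Perm (Fin (n - 1))) (p : ℕ) :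
    p < tauPerm n σ m ↔ ShortT hn m ((Aset n p).image σ) := by
  set S : Set ℕ := {t : ℕ |
    0 ≤ coord n m (n - 1) + ∑ i : Fin (n - 1),
      (if (i : ℕ) < t then coord n m ((σ i : ℕ)) else - coord n m ((σ i : ℕ)))} with hS
  have hmemS : ∀ t, t ∈ S ↔ (0 ≤ coord n m (n - 1) + ∑ i : Fin (n - 1),
      (if (i : ℕ) < t then coord n m ((σ i : ℕ)) else - coord n m ((σ i : ℕ)))) :=
    fun t => Iff.rfl
  have htau : tauPerm n σ m = sInf S := rfl
  have hlastmem : (n - 1) ∈ S := by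
    rw [hmemS]
    have hall : ∀ i : Fin (n - 1), (i : ℕ) < n - 1 := fun i => i.2
    simp only [if_pos (hall _)]
    have : (0:ℝ) < coord n m (n - 1) := by rw [coord_last hn]; exact hm _
    have h2 : (0:ℝ) ≤ ∑ i : Fin (n - 1), coord n m ((σ i : ℕ)) :=
      Finset.sum_nonneg (fun i _ => by rw [coord_emb hn]; exact (hm _).le)
    linarith
  have hne : S.Nonempty := ⟨n - 1, hlastmem⟩
  constructor
  · intro h
    have hp' : p ∉ S := fun hmem => absurd (Nat.sInf_le hmem) (by omega)
    rw [hmemS, cond_iff hn] at hp'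
    exact not_le.mp hp'
  · intro h
    have key : ∀ t ∈ S, p < t := by
      intro t ht
      by_contra hle
      push_neg at hle
      have hsub : Jset hn ((Aset n t).image σ) ⊆ Jset hn ((Aset n p).image σ) := by
        apply insert_subset_insert
        apply image_subset_image
        apply image_subset_image
        intro i hi
        simp only [Aset, mem_filter, mem_univ, true_and] at hi ⊢
        omega
      have hshort := short_mono m (fun i => (hm i).le) hsub h
      rw [hmemS, cond_iff hn] at ht
      exact absurd ht (not_le.mpr hshort)
    rw [htau]
    exact key _ (Nat.sInf_mem hne)

end Stmt15Aux

namespace Stmt15Aux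

lemma subtypeCongr_apply_of_pos {α : Type*} {p q : α → Prop} [DecidablePred p] [DecidablePred q]
    (e : {x // p x} ≃ {x // q x}) (f : {x // ¬p x} ≃ {x // ¬q x}) (a : α) (h : p a) :
    Equiv.subtypeCongr e f a = e ⟨a, h⟩ := by
  simp [Equiv.subtypeCongr, h]

lemma subtypeCongr_apply_of_neg {α : Type*} {p q : α → Prop} [DecidablePred p] [DecidablePred q]
    (e : {x // p x} ≃ {x // q x}) (f : {x // ¬p x} ≃ {x // ¬q x}) (a : α) (h : ¬ p a) :
    Equiv.subtypeCongr e f a = f ⟨a, h⟩ := by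
  simp [Equiv.subtypeCongr, h]

def fiberEquiv {N : ℕ} (A T : Finset (Fin N)) :
    (({x : Fin N // x ∈ A} ≃ {x : Fin N // x ∈ T}) ×
      ({x : Fin N // ¬ x ∈ A} ≃ {x : Fin N // ¬ x ∈ T})) ≃
    {σ : Equiv.Perm (Fin N) // A.image σ = T} where
  toFun ef := ⟨Equiv.subtypeCongr ef.1 ef.2, by
    ext j
    simp only [mem_image]
    constructor
    · rintro ⟨a, ha, rfl⟩
      rw [subtypeCongr_apply_of_pos ef.1 ef.2 a ha]
      exact (ef.1 ⟨a, ha⟩).2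
    · intro hj
      refine ⟨(ef.1.symm ⟨j, hj⟩ : Fin N), (ef.1.symm ⟨j, hj⟩).2, ?_⟩
      rw [subtypeCongr_apply_of_pos ef.1 ef.2 _ (ef.1.symm ⟨j, hj⟩).2, Subtype.coe_eta,
        Equiv.apply_symm_apply]⟩
  invFun σh :=
    (⟨fun x => ⟨σh.1 x, by
        have := mem_image_of_mem (⇑σh.1) x.2
        rwa [σh.2] at this⟩,
      fun y => ⟨σh.1.symm y, by
        have : (y : Fin N) ∈ A.image σh.1 := by rw [σh.2]; exact y.2
        obtain ⟨a, ha, haeq⟩ := mem_image.mp this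
        rwa [show σh.1.symm y = a from by rw [← haeq]; simp]⟩,
      fun x => by apply Subtype.ext; simp,
      fun y => by apply Subtype.ext; simp⟩,
     ⟨fun x => ⟨σh.1 x, by
        intro hmem
        have hmem' : (σh.1 x : Fin N) ∈ A.image σh.1 := by rw [σh.2]; exact hmem
        obtain ⟨a, ha, haeq⟩ := mem_image.mp hmem'
        exact x.2 (σh.1.injective haeq ▸ ha)⟩,
      fun y => ⟨σh.1.symm y, by
        intro hmem
        have : (y : Fin N) ∈ A.image σh.1 := by
          refine mem_image.mpr ⟨σh.1.symm y, hmem, by simp⟩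
        rw [σh.2] at this
        exact y.2 this⟩,
      fun x => by apply Subtype.ext; simp,
      fun y => by apply Subtype.ext; simp⟩)
  left_inv := by
    rintro ⟨e, f⟩
    refine Prod.ext ?_ ?_ <;> dsimp only <;>
      (apply Equiv.ext; intro x; apply Subtype.ext)
    · show Equiv.subtypeCongr e f (x : Fin N) = (e x : Fin N)
      rw [subtypeCongr_apply_of_pos e f _ x.2, Subtype.coe_eta]
    · show Equiv.subtypeCongr e f (x : Fin N) = (f x : Fin N)
      rw [subtypeCongr_apply_of_neg e f _ x.2, Subtype.coe_eta]
  right_inv := by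
    rintro ⟨σ, hσ⟩
    apply Subtype.ext
    apply Equiv.ext
    intro a
    by_cases h : a ∈ A
    · rw [subtypeCongr_apply_of_pos _ _ a h]; rfl
    · rw [subtypeCongr_apply_of_neg _ _ a h]; rfl

lemma fiber_card {N : ℕ} (A T : Finset (Fin N)) (h : A.card = T.card) :
    Nat.card {σ : Equiv.Perm (Fin N) // A.image σ = T} =
      (A.card).factorial * (N - A.card).factorial := by
  rw [Nat.card_eq_fintype_card, ← Fintype.card_congr (fiberEquiv A T), Fintype.card_prod]
  have h1 : Fintype.card ({x : Fin N // x ∈ A} ≃ {x : Fin N // x ∈ T}) = (A.card).factorial := by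
    rw [Fintype.card_equiv (Finset.equivOfCardEq h), Fintype.card_coe]
  have hc1 : Fintype.card {x : Fin N // ¬ x ∈ A} = N - A.card := by
    rw [Fintype.card_subtype_compl, Fintype.card_fin, Fintype.card_coe]
  have hc2 : Fintype.card {x : Fin N // ¬ x ∈ T} = N - T.card := by
    rw [Fintype.card_subtype_compl, Fintype.card_fin, Fintype.card_coe]
  have h2 : Fintype.card ({x : Fin N // ¬ x ∈ A} ≃ {x : Fin N // ¬ x ∈ T})
      = (N - A.card).factorial := by
    rw [Fintype.card_equiv (Fintype.equivOfCardEq (by rw [hc1, hc2, h])), hc1]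
  rw [h1, h2]

end Stmt15Aux

namespace Stmt15Aux

lemma maxIdx_spec (hn : 1 ≤ n) (ℓ : Fin n → ℝ) :
    ∃ h : maxIdx n ℓ < n, ∀ j, ℓ j ≤ ℓ ⟨maxIdx n ℓ, h⟩ := by
  have hne : {i : ℕ | ∃ h : i < n, ∀ j : Fin n, ℓ j ≤ ℓ ⟨i, h⟩}.Nonempty := by
    have : Nonempty (Fin n) := ⟨⟨0, hn⟩⟩
    obtain ⟨i, hi⟩ := Finite.exists_max ℓ
    exact ⟨i.1, i.2, hi⟩
  exact Nat.sInf_mem hne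

lemma maxIdx_lt (hn : 1 ≤ n) (ℓ : Fin n → ℝ) : maxIdx n ℓ < n := by
  obtain ⟨h, -⟩ := maxIdx_spec hn ℓ
  exact h

def i0F (hn : 1 ≤ n) (ℓ : Fin n → ℝ) : Fin n := ⟨maxIdx n ℓ, maxIdx_lt hn ℓ⟩

lemma le_max (hn : 1 ≤ n) (ℓ : Fin n → ℝ) (j : Fin n) : ℓ j ≤ ℓ (i0F hn ℓ) := by
  obtain ⟨h, hm⟩ := maxIdx_spec hn ℓ
  exact hm j

lemma tilde_eq_swap (hn : 1 ≤ n) (ℓ : Fin n → ℝ) :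
    tildeVec n ℓ = fun j => ℓ (Equiv.swap (i0F hn ℓ) (lastI hn) j) := by
  funext j
  rw [tildeVec]
  by_cases h1 : (j : ℕ) = maxIdx n ℓ
  · have hj : j = i0F hn ℓ := Fin.ext h1
    rw [if_pos h1, hj, Equiv.swap_apply_left, coord_last hn]
  · rw [if_neg h1]
    by_cases h2 : (j : ℕ) = n - 1
    · have hj : j = lastI hn := Fin.ext h2
      rw [if_pos h2, hj, Equiv.swap_apply_right, coord, dif_pos (maxIdx_lt hn ℓ)]
      rfl
    · rw [if_neg h2, Equiv.swap_apply_of_ne_of_ne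
        (fun h => h1 (by rw [h]; rfl)) (fun h => h2 (by rw [h]; rfl))]

end Stmt15Aux


open Stmt15Aux

/-- For every `n ≥ 1`, `ℓ ∈ (0,∞)ⁿ` and `0 ≤ p ≤ n-1`,
`p! (n-1-p)! a_p(ℓ) = #{σ ∈ Σ_{n-1} : τ_σ(ℓ̃) > p}`. -/
theorem stmt15 (n : ℕ) (hn : 1 ≤ n) (ℓ : Fin n → ℝ) (hℓ : ∀ i, 0 < ℓ i)
    (p : ℕ) (hp : p ≤ n - 1) :
    Nat.factorial p * Nat.factorial (n - 1 - p) * aCount n p ℓ =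
      Nat.card {σ : Equiv.Perm (Fin (n - 1)) // p < tauPerm n σ (tildeVec n ℓ)} := by
  classical
  set m : Fin n → ℝ := tildeVec n ℓ with hmdef
  set e : Equiv.Perm (Fin n) := Equiv.swap (i0F hn ℓ) (lastI hn) with hedef
  have hme : ∀ j, m j = ℓ (e j) := by
    intro j
    rw [hmdef, tilde_eq_swap hn ℓ]
  have hmpos : ∀ i, 0 < m i := fun i => (hme i) ▸ hℓ (e i)
  -- RHS as a Finset card
  rw [Nat.card_eq_fintype_card, Fintype.card_subtype]
  have hfc : (univ.filter fun σ : Equiv.Perm (Fin (n - 1)) => p < tauPerm n σ m) =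
      univ.filter fun σ : Equiv.Perm (Fin (n - 1)) => ShortT hn m ((Aset n p).image σ) :=
    filter_congr fun σ _ => by rw [tau_gt_iff hn m hmpos σ p]
  rw [hfc]
  set t : Finset (Finset (Fin (n - 1))) :=
    univ.filter (fun T => T.card = p ∧ ShortT hn m T) with htdef
  have hmap : ∀ σ ∈ (univ.filter fun σ : Equiv.Perm (Fin (n - 1)) =>
      ShortT hn m ((Aset n p).image σ)), (Aset n p).image σ ∈ t := by
    intro σ hσ
    rw [htdef, mem_filter]
    simp only [mem_filter, mem_univ, true_and] at hσ
    exact ⟨mem_univ _, by rw [card_image_of_injective _ σ.injective, card_Aset hp], hσ⟩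
  rw [card_eq_sum_card_fiberwise hmap]
  have hfib : ∀ T ∈ t, ((univ.filter fun σ : Equiv.Perm (Fin (n - 1)) =>
      ShortT hn m ((Aset n p).image σ)).filter
        fun σ : Equiv.Perm (Fin (n - 1)) => (Aset n p).image σ = T).card =
      p.factorial * (n - 1 - p).factorial := by
    intro T hT
    simp only [htdef, mem_filter, mem_univ, true_and] at hT
    have heq : ((univ.filter fun σ : Equiv.Perm (Fin (n - 1)) =>
        ShortT hn m ((Aset n p).image σ)).filter
          fun σ : Equiv.Perm (Fin (n - 1)) => (Aset n p).image σ = T) =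
        univ.filter fun σ : Equiv.Perm (Fin (n - 1)) => (Aset n p).image σ = T := by
      rw [filter_filter]
      apply filter_congr
      intro σ _
      constructor
      · exact And.right
      · intro h
        exact ⟨by rw [h]; exact hT.2, h⟩
    rw [heq]
    have hfc2 := fiber_card (Aset n p) T (by rw [card_Aset hp, hT.1])
    rw [Nat.card_eq_fintype_card, Fintype.card_subtype, card_Aset hp] at hfc2
    exact hfc2
  rw [sum_congr rfl hfib, sum_const, smul_eq_mul]
  -- Now it remains to show `p! * (n-1-p)! * aCount n p ℓ = t.card * (p! * (n-1-p)!)`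
  have hacount : aCount n p ℓ = t.card := by
    rw [aCount, Nat.card_eq_fintype_card, Fintype.card_subtype]
    -- step A : swap by e
    have stepA : (univ.filter fun J : Finset (Fin n) =>
        J.card = p + 1 ∧ (∃ i ∈ J, (i : ℕ) = maxIdx n ℓ) ∧
          ∑ j ∈ J, ℓ j < ∑ j ∈ Jᶜ, ℓ j).card =
        (univ.filter fun J : Finset (Fin n) =>
        J.card = p + 1 ∧ lastI hn ∈ J ∧ ∑ j ∈ J, m j < ∑ j ∈ Jᶜ, m j).card := by
      have hsum : ∀ J : Finset (Fin n), ∑ j ∈ J.image e, m j = ∑ j ∈ J, ℓ j := by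
        intro J
        rw [Finset.sum_image (f := m) (fun a _ b _ h => e.injective h)]
        exact Finset.sum_congr rfl fun j _ => by
          rw [hme (e j), hedef, Equiv.swap_apply_self]
      refine Finset.card_nbij' (fun J => J.image e) (fun J => J.image e) ?_ ?_ ?_ ?_
      · intro J hJ
        simp only [mem_coe, mem_filter, mem_univ, true_and] at hJ ⊢
        obtain ⟨hc, ⟨i, hiJ, hival⟩, hshort⟩ := hJ
        have hii0 : i = i0F hn ℓ := Fin.ext hival
        refine ⟨by rw [card_image_of_injective _ e.injective, hc], ?_, ?_⟩
        · refine mem_image.mpr ⟨i, hiJ, ?_⟩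
          rw [hii0, hedef, Equiv.swap_apply_left]
        · rw [hsum J, image_compl_perm, hsum Jᶜ]
          exact hshort
      · intro J hJ
        simp only [mem_coe, mem_filter, mem_univ, true_and] at hJ ⊢
        obtain ⟨hc, hlast, hshort⟩ := hJ
        refine ⟨by rw [card_image_of_injective _ e.injective, hc], ?_, ?_⟩
        · refine ⟨i0F hn ℓ, ?_, rfl⟩
          refine mem_image.mpr ⟨lastI hn, hlast, ?_⟩
          rw [hedef, Equiv.swap_apply_right]
        · have h1 : ∑ j ∈ J.image e, ℓ j = ∑ j ∈ J, m j := by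
            rw [Finset.sum_image (f := ℓ) (fun a _ b _ h => e.injective h)]
            exact Finset.sum_congr rfl fun j _ => (hme j).symm
          have h2 : ∑ j ∈ (J.image e)ᶜ, ℓ j = ∑ j ∈ Jᶜ, m j := by
            rw [image_compl_perm, Finset.sum_image (f := ℓ) (fun a _ b _ h => e.injective h)]
            exact Finset.sum_congr rfl fun j _ => (hme j).symm
          rw [h1, h2]
          exact hshort
      · intro J _
        show (J.image e).image e = J
        rw [Finset.image_image]
        have he2 : (⇑e ∘ ⇑e) = id := by
          funext x
          simp [hedef, Equiv.swap_apply_self]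
        rw [he2, Finset.image_id]
      · intro J _
        show (J.image e).image e = J
        rw [Finset.image_image]
        have he2 : (⇑e ∘ ⇑e) = id := by
          funext x
          simp [hedef, Equiv.swap_apply_self]
        rw [he2, Finset.image_id]
    rw [stepA]
    -- step B : strip the last coordinate
    refine Finset.card_nbij'
      (fun (J : Finset (Fin n)) => univ.filter (fun i : Fin (n - 1) => emb n i ∈ J))
      (fun (T : Finset (Fin (n - 1))) => Jset hn T) ?_ ?_ ?_ ?_
    · intro J hJ
      rw [htdef, mem_coe, mem_filter]
      simp only [mem_coe, mem_filter, mem_univ, true_and] at hJ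
      refine ⟨mem_univ _, ?_⟩
      show (univ.filter (fun i : Fin (n - 1) => emb n i ∈ J)).card = p ∧
        ShortT hn m (univ.filter (fun i : Fin (n - 1) => emb n i ∈ J))
      obtain ⟨hc, hlast, hshort⟩ := hJ
      have hJeq : Jset hn (univ.filter (fun i : Fin (n - 1) => emb n i ∈ J)) = J := by
        ext j
        simp only [Jset, mem_insert, mem_image, mem_filter, mem_univ, true_and]
        constructor
        · rintro (rfl | ⟨i, hi, rfl⟩)
          · exact hlast
          · exact hi
        · intro hj
          rcases eq_last_or_emb hn j with h | ⟨i, rfl⟩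
          · exact Or.inl h
          · exact Or.inr ⟨i, hj, rfl⟩
      constructor
      · have := card_Jset hn (univ.filter (fun i : Fin (n - 1) => emb n i ∈ J))
        rw [hJeq, hc] at this
        omega
      · rw [ShortT, hJeq]
        exact hshort
    · intro T hT
      simp only [htdef, mem_coe, mem_filter, mem_univ, true_and] at hT ⊢
      refine ⟨by rw [card_Jset hn, hT.1], ?_, hT.2⟩
      exact mem_insert_self _ _
    · intro J hJ
      simp only [mem_coe, mem_filter, mem_univ, true_and] at hJ
      ext j
      simp only [Jset, mem_insert, mem_image, mem_filter, mem_univ, true_and]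
      constructor
      · rintro (rfl | ⟨i, hi, rfl⟩)
        · exact hJ.2.1
        · exact hi
      · intro hj
        rcases eq_last_or_emb hn j with h | ⟨i, rfl⟩
        · exact Or.inl h
        · exact Or.inr ⟨i, hj, rfl⟩
    · intro T hT
      ext i
      simp only [mem_filter, mem_univ, true_and, Jset, mem_insert, mem_image]
      constructor
      · rintro (h | ⟨i', hi', h⟩)
        · exact absurd h (emb_ne_last hn i)
        · rwa [← emb_inj h]
      · intro hi
        exact Or.inr ⟨i, hi, rfl⟩
  rw [hacount]
  ring
end
end
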